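/- arXiv:1603.06277 — 6 statements merged into one kernel-verified Lean document; each statement's English description precedes it below -/
import Mathlib

section
/- For a σ-finite measure ν on a measurable space X and a statistic t : X → ℝ^n, define Z(η) = ∫_X exp⟨η, t(x)⟩ dν(x) and H = {η : Z(η) < ∞}, and assume Z(η) > 0 on H. If η lies in the interior of H, then log Z is differentiable at η and its gradient equals the expected sufficient statistic: ∇ log Z(η) = ∫_X t(x) · exp(⟨η, t(x)⟩ − log Z(η)) dν(x). -/
open MeasureTheory
open scoped RealInnerProductSpace

/-- **Gradient of the log partition function is the expected sufficient statistic.**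
For a σ-finite measure `ν` on `X` and statistic `t : X → ℝⁿ`, define
`Z(η) = ∫ exp⟪η, t x⟫ dν` and `H = {η : Z(η) < ∞}` (expressed via integrability),
and assume `Z > 0` on `H`.  If `η` lies in the interior of `H`, then `log Z` is
differentiable at `η` with gradient the expected sufficient statistic
`∫ t(x) · exp(⟪η, t x⟫ − log Z(η)) dν` under the exponential family density `p(·|η)`. -/
theorem stmt2 {X : Type*} [MeasurableSpace X] (ν : Measure X) [SigmaFinite ν]
    {n : ℕ} (t : X → EuclideanSpace ℝ (Fin n)) (ht : Measurable t)
    (Z : EuclideanSpace ℝ (Fin n) → ℝ)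
    (hZ : ∀ η, Z η = ∫ x, Real.exp ⟪η, t x⟫ ∂ν)
    (H : Set (EuclideanSpace ℝ (Fin n)))
    (hH : H = {η | Integrable (fun x => Real.exp ⟪η, t x⟫) ν})
    (hpos : ∀ η ∈ H, 0 < Z η)
    (η : EuclideanSpace ℝ (Fin n)) (hη : η ∈ interior H) :
    HasGradientAt (fun η' => Real.log (Z η'))
      (∫ x, Real.exp (⟪η, t x⟫ - Real.log (Z η)) • t x ∂ν) η := by
  classical
  set D := InnerProductSpace.toDual ℝ (EuclideanSpace ℝ (Fin n)) with hD
  -- get a ball inside H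
  obtain ⟨ε, hε, hball⟩ := Metric.isOpen_iff.mp isOpen_interior η hη
  have hballH : Metric.ball η ε ⊆ H := hball.trans interior_subset
  have hint : ∀ θ : EuclideanSpace ℝ (Fin n), ‖θ - η‖ < ε → Integrable (fun x => Real.exp ⟪θ, t x⟫) ν := by
    intro θ hθ
    have : θ ∈ H := hballH (by simpa [Metric.mem_ball, dist_eq_norm] using hθ)
    rwa [hH] at this
  have hηH : η ∈ H := interior_subset hη
  have hZη : 0 < Z η := hpos η hηH
  set δ : ℝ := ε / (4 * (n + 1)) with hδdef
  have hδ : 0 < δ := by positivity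
  set c : ℝ := 2 * δ with hcdef
  have hc : 0 < c := by positivity
  -- the sign vectors
  set σ : Finset (Fin n) → EuclideanSpace ℝ (Fin n) := fun T => (WithLp.toLp 2 (fun i => if i ∈ T then c else -c) : EuclideanSpace ℝ (Fin n)) with hσ
  -- l2 norm bounded by l1 norm
  have hl1 : ∀ y : EuclideanSpace ℝ (Fin n), ‖y‖ ≤ ∑ i, |y i| := by
    intro y
    rw [EuclideanSpace.norm_eq]
    have h1 : ∑ i, ‖y i‖ ^ 2 ≤ (∑ i, ‖y i‖) ^ 2 :=
      Finset.sum_sq_le_sq_sum_of_nonneg (fun i _ => norm_nonneg _)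
    calc √(∑ i, ‖y i‖ ^ 2) ≤ √((∑ i, ‖y i‖) ^ 2) := Real.sqrt_le_sqrt h1
      _ = ∑ i, ‖y i‖ := Real.sqrt_sq (Finset.sum_nonneg fun i _ => norm_nonneg _)
      _ = ∑ i, |y i| := by simp [Real.norm_eq_abs]
  -- norm of sign vectors
  have hσnorm : ∀ T : Finset (Fin n), ‖σ T‖ < ε := by
    intro T
    have h1 : ‖σ T‖ ≤ ∑ i : Fin n, |σ T i| := hl1 _
    have h2 : ∑ i : Fin n, |σ T i| = n * c := by
      have : ∀ i : Fin n, |σ T i| = c := by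
        intro i
        by_cases hi : i ∈ T <;> simp [hσ, hi, abs_of_pos hc, abs_of_neg (neg_neg_iff_pos.mpr hc)]
      simp [this, Finset.sum_const, mul_comm]
    have h3 : (n : ℝ) * c < ε := by
      have hn1 : (0:ℝ) < (n:ℝ) + 1 := by positivity
      have : (n:ℝ) * c = ε * (2 * n) / (4 * (n + 1)) := by
        rw [hcdef, hδdef]; ring
      rw [this, div_lt_iff₀ (by positivity)]
      nlinarith [Nat.cast_nonneg (α := ℝ) n]
    linarith
  -- the key pointwise exponential bound
  have hexpbound : ∀ y : EuclideanSpace ℝ (Fin n), Real.exp (⟪η, y⟫ + c * ‖y‖) ≤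
      ∑ T ∈ (Finset.univ : Finset (Fin n)).powerset, Real.exp ⟪η + σ T, y⟫ := by
    intro y
    have h1 : Real.exp (c * ‖y‖) ≤ ∏ i : Fin n, (Real.exp (c * y i) + Real.exp (-(c * y i))) := by
      have h2 : Real.exp (c * ‖y‖) ≤ Real.exp (∑ i, c * |y i|) := by
        apply Real.exp_le_exp.mpr
        rw [← Finset.mul_sum]
        exact mul_le_mul_of_nonneg_left (hl1 y) hc.le
      refine h2.trans ?_
      rw [Real.exp_sum]
      apply Finset.prod_le_prod (fun i _ => (Real.exp_pos _).le)
      intro i _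
      rcases abs_choice (y i) with h | h
      · rw [h]; exact le_add_of_nonneg_right (Real.exp_pos _).le
      · rw [h, mul_neg]; exact le_add_of_nonneg_left (Real.exp_pos _).le
    have h3 : ∏ i : Fin n, (Real.exp (c * y i) + Real.exp (-(c * y i))) =
        ∑ T ∈ (Finset.univ : Finset (Fin n)).powerset, Real.exp ⟪σ T, y⟫ := by
      rw [Finset.prod_add]
      apply Finset.sum_congr rfl
      intro T hT
      rw [← Real.exp_sum, ← Real.exp_sum, ← Real.exp_add]
      congr 1
      have hinner : ⟪σ T, y⟫ = ∑ i : Fin n, σ T i * y i := by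
        simp [PiLp.inner_apply, RCLike.inner_apply, hσ, mul_comm]
      rw [hinner, ← Finset.sum_sdiff (Finset.subset_univ T)]
      rw [add_comm]
      congr 1
      · refine Finset.sum_congr rfl fun i hi => ?_
        have h5 : i ∉ T := (Finset.mem_sdiff.mp hi).2
        simp [hσ, h5, neg_mul]
      · exact Finset.sum_congr rfl fun i hi => by simp [hσ, hi]
    calc Real.exp (⟪η, y⟫ + c * ‖y‖) = Real.exp ⟪η, y⟫ * Real.exp (c * ‖y‖) := Real.exp_add _ _
      _ ≤ Real.exp ⟪η, y⟫ * ∑ T ∈ (Finset.univ : Finset (Fin n)).powerset, Real.exp ⟪σ T, y⟫ := by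
          rw [← h3]; exact mul_le_mul_of_nonneg_left h1 (Real.exp_pos _).le
      _ = ∑ T ∈ (Finset.univ : Finset (Fin n)).powerset, Real.exp ⟪η + σ T, y⟫ := by
          rw [Finset.mul_sum]
          exact Finset.sum_congr rfl fun T _ => by rw [← Real.exp_add, inner_add_left]
  -- the bound function
  set B : X → ℝ := fun x => δ⁻¹ *
      ∑ T ∈ (Finset.univ : Finset (Fin n)).powerset, Real.exp ⟪η + σ T, t x⟫ with hB
  have hBint : Integrable B ν := by
    apply Integrable.const_mul
    apply integrable_finset_sum
    intro T _
    apply hint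
    simpa using hσnorm T
  -- measurability helpers
  have hmeas : ∀ θ : EuclideanSpace ℝ (Fin n), AEStronglyMeasurable (fun x => Real.exp ⟪θ, t x⟫) ν := by
    intro θ
    have hcont : Continuous fun y : EuclideanSpace ℝ (Fin n) => Real.exp ⟪θ, y⟫ :=
      Real.continuous_exp.comp (continuous_const.inner continuous_id)
    exact hcont.comp_aestronglyMeasurable ht.aestronglyMeasurable
  -- the derivative candidate
  set F' : EuclideanSpace ℝ (Fin n) → X → EuclideanSpace ℝ (Fin n) →L[ℝ] ℝ := fun θ x => Real.exp ⟪θ, t x⟫ • innerSL ℝ (t x) with hF'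
  have hF'meas : AEStronglyMeasurable (F' η) ν := by
    have hcont : Continuous fun y : EuclideanSpace ℝ (Fin n) => Real.exp ⟪η, y⟫ • innerSL ℝ y := by
      exact (Real.continuous_exp.comp (continuous_const.inner continuous_id)).smul
        (innerSL ℝ).continuous
    exact hcont.comp_aestronglyMeasurable ht.aestronglyMeasurable
  have hF'norm : ∀ θ : EuclideanSpace ℝ (Fin n), ∀ x : X, ‖F' θ x‖ = Real.exp ⟪θ, t x⟫ * ‖t x‖ := by
    intro θ x
    rw [show F' θ x = Real.exp ⟪θ, t x⟫ • innerSL ℝ (t x) from rfl, norm_smul (Real.exp ⟪θ, t x⟫) (innerSL ℝ (t x)), Real.norm_eq_abs,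
      Real.abs_exp, innerSL_apply_norm]
  -- the bound
  have hbound : ∀ x : X, ∀ θ ∈ Metric.ball η δ, ‖F' θ x‖ ≤ B x := by
    intro x θ hθ
    rw [hF'norm]
    set y := t x
    have h1 : ⟪θ, y⟫ ≤ ⟪η, y⟫ + δ * ‖y‖ := by
      have h2 : ⟪θ - η, y⟫ ≤ ‖θ - η‖ * ‖y‖ := real_inner_le_norm _ _
      have h3 : ‖θ - η‖ ≤ δ := by
        rw [Metric.mem_ball, dist_eq_norm] at hθ; exact hθ.le
      have h4 : ⟪θ - η, y⟫ = ⟪θ, y⟫ - ⟪η, y⟫ := by rw [inner_sub_left]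
      nlinarith [norm_nonneg y]
    have h2 : ‖y‖ ≤ δ⁻¹ * Real.exp (δ * ‖y‖) := by
      rw [le_inv_mul_iff₀ hδ]
      have := Real.add_one_le_exp (δ * ‖y‖)
      linarith
    calc Real.exp ⟪θ, y⟫ * ‖y‖
        ≤ Real.exp (⟪η, y⟫ + δ * ‖y‖) * (δ⁻¹ * Real.exp (δ * ‖y‖)) := by
          apply mul_le_mul (Real.exp_le_exp.mpr h1) h2 (norm_nonneg _)
          positivity
      _ = δ⁻¹ * Real.exp (⟪η, y⟫ + c * ‖y‖) := by
          have hsplit : Real.exp (⟪η, y⟫ + c * ‖y‖)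
              = Real.exp (⟪η, y⟫ + δ * ‖y‖) * Real.exp (δ * ‖y‖) := by
            rw [← Real.exp_add]
            congr 1
            rw [hcdef]; ring
          rw [hsplit]; ring
      _ ≤ B x := by
          rw [hB]
          exact mul_le_mul_of_nonneg_left (hexpbound y) (inv_nonneg.mpr hδ.le)
  -- differentiability of the integrand
  have hdiff : ∀ x : X, ∀ θ : EuclideanSpace ℝ (Fin n), HasFDerivAt (fun θ' => Real.exp ⟪θ', t x⟫) (F' θ x) θ := by
    intro x θ
    have h1 : HasFDerivAt (fun θ' : EuclideanSpace ℝ (Fin n) => ⟪θ', t x⟫) (innerSL ℝ (t x)) θ := by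
      have h2 : (fun θ' : EuclideanSpace ℝ (Fin n) => ⟪θ', t x⟫)
          = fun θ' => innerSL ℝ (t x) θ' := by
        funext θ'
        rw [innerSL_apply_apply]
        exact real_inner_comm _ _
      rw [h2]
      exact (innerSL ℝ (t x)).hasFDerivAt
    exact (Real.hasDerivAt_exp _).comp_hasFDerivAt θ h1
  -- differentiation under the integral sign
  have hZint : Integrable (fun x => Real.exp ⟪η, t x⟫) ν := by rwa [hH] at hηH
  have hfd : HasFDerivAt (fun θ => ∫ x, Real.exp ⟪θ, t x⟫ ∂ν) (∫ x, F' η x ∂ν) η :=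
    hasFDerivAt_integral_of_dominated_of_fderiv_le (Metric.ball_mem_nhds η hδ)
      (Filter.Eventually.of_forall fun θ => hmeas θ) hZint hF'meas
      (Filter.Eventually.of_forall fun x => hbound x) hBint
      (Filter.Eventually.of_forall fun x θ _ => hdiff x θ)
  have hfdZ : HasFDerivAt Z (∫ x, F' η x ∂ν) η := by
    have : Z = fun θ => ∫ x, Real.exp ⟪θ, t x⟫ ∂ν := funext hZ
    rwa [this]
  have hlog : HasFDerivAt (fun θ => Real.log (Z θ)) ((Z η)⁻¹ • ∫ x, F' η x ∂ν) η :=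
    hfdZ.log hZη.ne'
  -- convert to gradient form
  rw [hasGradientAt_iff_hasFDerivAt]
  -- integrability facts needed for the identification of the gradient
  have hInt1 : Integrable (fun x => Real.exp ⟪η, t x⟫ • t x) ν := by
    apply Integrable.mono' hBint
    · have hcont : Continuous fun y : EuclideanSpace ℝ (Fin n) => Real.exp ⟪η, y⟫ • y :=
        (Real.continuous_exp.comp (continuous_const.inner continuous_id)).smul continuous_id
      exact hcont.comp_aestronglyMeasurable ht.aestronglyMeasurable
    · refine Filter.Eventually.of_forall fun x => ?_
      have := hbound x η (Metric.mem_ball_self hδ)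
      rw [hF'norm] at this
      rw [norm_smul, Real.norm_eq_abs, abs_of_pos (Real.exp_pos _)]
      exact this
  have hInt2 : Integrable (F' η) ν := by
    apply Integrable.mono' hBint hF'meas
    exact Filter.Eventually.of_forall fun x => hbound x η (Metric.mem_ball_self hδ)
  -- identify the gradient
  have hgrad : (D (∫ x, Real.exp (⟪η, t x⟫ - Real.log (Z η)) • t x ∂ν) : EuclideanSpace ℝ (Fin n) →L[ℝ] ℝ)
      = (Z η)⁻¹ • ∫ x, F' η x ∂ν := by
    apply ContinuousLinearMap.ext
    intro w
    have hg : (∫ x, Real.exp (⟪η, t x⟫ - Real.log (Z η)) • t x ∂ν)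
        = (Z η)⁻¹ • ∫ x, Real.exp ⟪η, t x⟫ • t x ∂ν := by
      rw [← integral_smul]
      apply integral_congr_ae
      refine Filter.Eventually.of_forall fun x => ?_
      simp only [Real.exp_sub, Real.exp_log hZη, div_eq_inv_mul, mul_smul]
    rw [hg]
    have hLHS : (D ((Z η)⁻¹ • ∫ x, Real.exp ⟪η, t x⟫ • t x ∂ν) : EuclideanSpace ℝ (Fin n) →L[ℝ] ℝ) w
        = (Z η)⁻¹ * ⟪∫ x, Real.exp ⟪η, t x⟫ • t x ∂ν, w⟫ := by
      rw [InnerProductSpace.toDual_apply_apply, real_inner_smul_left]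
    rw [hLHS]
    have hRHS : ((Z η)⁻¹ • ∫ x, F' η x ∂ν) w = (Z η)⁻¹ * (∫ x, F' η x ∂ν) w := rfl
    rw [hRHS]
    congr 1
    rw [ContinuousLinearMap.integral_apply hInt2]
    have h1 : ∀ x, (F' η x) w = ⟪w, Real.exp ⟪η, t x⟫ • t x⟫ := by
      intro x
      rw [show F' η x = Real.exp ⟪η, t x⟫ • innerSL ℝ (t x) from rfl,
        ContinuousLinearMap.smul_apply, innerSL_apply_apply, smul_eq_mul,
        real_inner_smul_right, real_inner_comm (t x) w]
    rw [show (∫ x, (F' η x) w ∂ν) = ∫ x, ⟪w, Real.exp ⟪η, t x⟫ • t x⟫ ∂ν from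
      integral_congr_ae (Filter.Eventually.of_forall fun x => h1 x)]
    rw [integral_inner hInt1 w]
    exact real_inner_comm _ _
  rw [hgrad]
  exact hlog
end

section
/- For a σ-finite measure ν on a measurable space X and a statistic t : X → ℝ^n with partition function Z and H = {η : 0 < Z(η) < ∞}, suppose the family is minimal in the sense that for every nonzero v ∈ ℝ^n the function x ↦ ⟨v, t(x)⟩ is not ν-almost-everywhere equal to a constant. Then for every η in the interior of H, the Hessian ∇² log Z(η) is positive definite: vᵀ (∇² log Z(η)) v > 0 for all nonzero v ∈ ℝ^n. -/
open MeasureTheory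
open scoped RealInnerProductSpace


private lemma exp_mul_le_of_abs_le {a b y : ℝ} (h : |a| ≤ b) :
    Real.exp (a * y) ≤ Real.exp (b * y) + Real.exp (-(b * y)) := by
  have h1 : a * y ≤ b * |y| := by
    calc a * y ≤ |a * y| := le_abs_self _
    _ = |a| * |y| := abs_mul a y
    _ ≤ b * |y| := mul_le_mul_of_nonneg_right h (abs_nonneg y)
  rcases abs_cases y with ⟨hy, _⟩ | ⟨hy, _⟩
  · rw [hy] at h1
    exact (Real.exp_le_exp.2 h1).trans (le_add_of_nonneg_right (Real.exp_pos _).le)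
  · rw [hy, mul_neg] at h1
    exact (Real.exp_le_exp.2 h1).trans (le_add_of_nonneg_left (Real.exp_pos _).le)

private lemma abs_le_exp_add_exp (y : ℝ) : |y| ≤ Real.exp y + Real.exp (-y) := by
  have h := Real.add_one_le_exp |y|
  rcases abs_cases y with ⟨hy, _⟩ | ⟨hy, _⟩ <;> rw [hy] at h ⊢
  · linarith [Real.exp_pos (-y)]
  · linarith [Real.exp_pos y]

private lemma sq_le_exp_add_exp (y : ℝ) : y ^ 2 ≤ 4 * (Real.exp y + Real.exp (-y)) := by
  have h1 : |y| / 2 + 1 ≤ Real.exp (|y| / 2) := Real.add_one_le_exp _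
  have h2 : Real.exp (|y| / 2) * Real.exp (|y| / 2) = Real.exp |y| := by
    rw [← Real.exp_add]; ring_nf
  have h3 : Real.exp |y| ≤ Real.exp y + Real.exp (-y) := by
    rcases abs_cases y with ⟨hy, _⟩ | ⟨hy, _⟩ <;> rw [hy]
    · exact le_add_of_nonneg_right (Real.exp_pos _).le
    · exact le_add_of_nonneg_left (Real.exp_pos _).le
  nlinarith [abs_nonneg y, sq_abs y, mul_self_nonneg (|y| / 2 + 1)]

-- pointwise bound for first derivative
private lemma pbound1 {c u s δ : ℝ} (hδ : 0 < δ) (hs : |s| < δ) :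
    |Real.exp (c + s * u) * u| ≤
      2 / δ * (Real.exp (c + 2 * δ * u) + Real.exp (c + -(2 * δ) * u)) := by
  have h1 : δ * |u| ≤ Real.exp (δ * u) + Real.exp (-(δ * u)) := by
    calc δ * |u| = |δ * u| := by rw [abs_mul, abs_of_pos hδ]
    _ ≤ _ := abs_le_exp_add_exp _
  obtain ⟨hs1, hs2⟩ := abs_lt.mp hs
  have h2 : Real.exp ((s + δ) * u) ≤ Real.exp (2 * δ * u) + Real.exp (-(2 * δ * u)) :=
    exp_mul_le_of_abs_le (by rw [abs_le]; constructor <;> linarith)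
  have h3 : Real.exp ((s - δ) * u) ≤ Real.exp (2 * δ * u) + Real.exp (-(2 * δ * u)) :=
    exp_mul_le_of_abs_le (by rw [abs_le]; constructor <;> linarith)
  have e1 : Real.exp (c + 2 * δ * u) = Real.exp c * Real.exp (2 * δ * u) := Real.exp_add _ _
  have e2 : Real.exp (c + -(2 * δ) * u) = Real.exp c * Real.exp (-(2 * δ * u)) := by
    rw [← Real.exp_add]; ring_nf
  calc |Real.exp (c + s * u) * u|
      = Real.exp c * (Real.exp (s * u) * (δ * |u|)) / δ := by
        rw [abs_mul, Real.abs_exp, Real.exp_add]; field_simp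
    _ ≤ Real.exp c * (Real.exp (s * u) * (Real.exp (δ * u) + Real.exp (-(δ * u)))) / δ := by
        gcongr
    _ = Real.exp c * (Real.exp ((s + δ) * u) + Real.exp ((s - δ) * u)) / δ := by
        rw [mul_add, ← Real.exp_add, ← Real.exp_add]; ring_nf
    _ ≤ Real.exp c * (2 * (Real.exp (2 * δ * u) + Real.exp (-(2 * δ * u)))) / δ := by
        gcongr
        linarith
    _ = 2 / δ * (Real.exp (c + 2 * δ * u) + Real.exp (c + -(2 * δ) * u)) := by
        rw [e1, e2]; field_simp

-- pointwise bound for second derivative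
private lemma pbound2 {c u s δ : ℝ} (hδ : 0 < δ) (hs : |s| < δ) :
    |Real.exp (c + s * u) * (u * u)| ≤
      8 / δ ^ 2 * (Real.exp (c + 2 * δ * u) + Real.exp (c + -(2 * δ) * u)) := by
  have h1 : δ ^ 2 * (u * u) ≤ 4 * (Real.exp (δ * u) + Real.exp (-(δ * u))) := by
    have := sq_le_exp_add_exp (δ * u)
    nlinarith [this]
  obtain ⟨hs1, hs2⟩ := abs_lt.mp hs
  have h2 : Real.exp ((s + δ) * u) ≤ Real.exp (2 * δ * u) + Real.exp (-(2 * δ * u)) :=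
    exp_mul_le_of_abs_le (by rw [abs_le]; constructor <;> linarith)
  have h3 : Real.exp ((s - δ) * u) ≤ Real.exp (2 * δ * u) + Real.exp (-(2 * δ * u)) :=
    exp_mul_le_of_abs_le (by rw [abs_le]; constructor <;> linarith)
  have e1 : Real.exp (c + 2 * δ * u) = Real.exp c * Real.exp (2 * δ * u) := Real.exp_add _ _
  have e2 : Real.exp (c + -(2 * δ) * u) = Real.exp c * Real.exp (-(2 * δ * u)) := by
    rw [← Real.exp_add]; ring_nf
  have huu : |u * u| = u * u := abs_of_nonneg (mul_self_nonneg u)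
  calc |Real.exp (c + s * u) * (u * u)|
      = Real.exp c * (Real.exp (s * u) * (δ ^ 2 * (u * u))) / δ ^ 2 := by
        rw [abs_mul, Real.abs_exp, huu, Real.exp_add]; field_simp
    _ ≤ Real.exp c * (Real.exp (s * u) * (4 * (Real.exp (δ * u) + Real.exp (-(δ * u))))) / δ ^ 2 := by
        gcongr
    _ = Real.exp c * (4 * (Real.exp ((s + δ) * u) + Real.exp ((s - δ) * u))) / δ ^ 2 := by
        have q1 : Real.exp (s * u) * Real.exp (δ * u) = Real.exp ((s + δ) * u) := by
          rw [← Real.exp_add]; ring_nf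
        have q2 : Real.exp (s * u) * Real.exp (-(δ * u)) = Real.exp ((s - δ) * u) := by
          rw [← Real.exp_add]; ring_nf
        rw [← q1, ← q2]; ring
    _ ≤ Real.exp c * (4 * (2 * (Real.exp (2 * δ * u) + Real.exp (-(2 * δ * u))))) / δ ^ 2 := by
        gcongr
        linarith
    _ = 8 / δ ^ 2 * (Real.exp (c + 2 * δ * u) + Real.exp (c + -(2 * δ) * u)) := by
        rw [e1, e2]; field_simp; ring


private lemma norm_le_sum_abs {n : ℕ} (y : EuclideanSpace ℝ (Fin n)) :
    ‖y‖ ≤ ∑ i, |y i| := by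
  rw [EuclideanSpace.norm_eq]
  have h : ∑ i, ‖y i‖ ^ 2 ≤ (∑ i, |y i|) ^ 2 := by
    simpa [Real.norm_eq_abs] using
      Finset.sum_sq_le_sq_sum_of_nonneg (f := fun i => |y i|)
        (fun i _ => abs_nonneg (y i))
  calc Real.sqrt (∑ i, ‖y i‖ ^ 2) ≤ Real.sqrt ((∑ i, |y i|) ^ 2) := Real.sqrt_le_sqrt h
  _ = ∑ i, |y i| := Real.sqrt_sq (Finset.sum_nonneg fun i _ => abs_nonneg _)

/-- If `exp (c ± a u)` are integrable then so is `exp c * u`. -/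
private lemma int_mul {X : Type*} [MeasurableSpace X] {ν : Measure X}
    {c u : X → ℝ} (hc : Measurable c) (hu : Measurable u) {a : ℝ} (ha : 0 < a)
    (h1 : Integrable (fun x => Real.exp (c x + a * u x)) ν)
    (h2 : Integrable (fun x => Real.exp (c x + -a * u x)) ν) :
    Integrable (fun x => Real.exp (c x) * u x) ν := by
  refine Integrable.mono (g := fun x =>
      (Real.exp (c x + a * u x) + Real.exp (c x + -a * u x)) / a)
    ((h1.add h2).div_const a) (hc.exp.mul hu).aestronglyMeasurable ?_
  filter_upwards with x
  have h3 : a * |u x| ≤ Real.exp (a * u x) + Real.exp (-(a * u x)) := by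
    calc a * |u x| = |a * u x| := by rw [abs_mul, abs_of_pos ha]
    _ ≤ _ := abs_le_exp_add_exp _
  have e1 : Real.exp (c x + a * u x) = Real.exp (c x) * Real.exp (a * u x) := Real.exp_add _ _
  have e2 : Real.exp (c x + -a * u x) = Real.exp (c x) * Real.exp (-(a * u x)) := by
    rw [← Real.exp_add]; ring_nf
  have hb : (0:ℝ) ≤ (Real.exp (c x + a * u x) + Real.exp (c x + -a * u x)) / a := by
    positivity
  rw [Real.norm_eq_abs, Real.norm_eq_abs, abs_of_nonneg hb, abs_mul, Real.abs_exp,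
    le_div_iff₀ ha, e1, e2]
  nlinarith [mul_le_mul_of_nonneg_left h3 (Real.exp_pos (c x)).le]

/-- differentiation under the integral sign at `s = 0` for `s ↦ ∫ exp (c + s u) * w`. -/
private lemma dui {X : Type*} [MeasurableSpace X] (ν : Measure X)
    {c u w B : X → ℝ} (hc : Measurable c) (hu : Measurable u) (hw : Measurable w)
    {δ : ℝ} (hδ : 0 < δ)
    (hint0 : Integrable (fun x => Real.exp (c x) * w x) ν)
    (hB : Integrable B ν)
    (hbound : ∀ x : X, ∀ s ∈ Metric.ball (0:ℝ) δ,
      |Real.exp (c x + s * u x) * (u x * w x)| ≤ B x) :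
    Integrable (fun x => Real.exp (c x) * (u x * w x)) ν ∧
      HasDerivAt (fun s : ℝ => ∫ x, Real.exp (c x + s * u x) * w x ∂ν)
        (∫ x, Real.exp (c x) * (u x * w x) ∂ν) 0 := by
  have key := hasDerivAt_integral_of_dominated_loc_of_deriv_le (μ := ν) (𝕜 := ℝ)
      (F := fun s x => Real.exp (c x + s * u x) * w x)
      (F' := fun s x => Real.exp (c x + s * u x) * (u x * w x))
      (x₀ := 0) (bound := B) (Metric.ball_mem_nhds 0 hδ)
      (Filter.Eventually.of_forall fun s =>
        ((hc.add (hu.const_mul s)).exp.mul hw).aestronglyMeasurable)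
      (hint0.congr (Filter.Eventually.of_forall fun x => by simp))
      ((hc.add (hu.const_mul 0)).exp.mul (hu.mul hw)).aestronglyMeasurable
      (Filter.Eventually.of_forall fun x s hs => by
        rw [Real.norm_eq_abs]; exact hbound x s hs)
      hB
      (Filter.Eventually.of_forall fun x s hs => by
        have h : HasDerivAt (fun s : ℝ => Real.exp (c x + s * u x) * w x)
            (Real.exp (c x + s * u x) * u x * w x) s :=
          (((hasDerivAt_mul_const (u x)).const_add (c x)).exp).mul_const (w x)
        simpa [mul_assoc] using h)
  obtain ⟨hi, hd⟩ := key
  constructor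
  · exact hi.congr (Filter.Eventually.of_forall fun x => by simp)
  · have he : (∫ x, Real.exp (c x + 0 * u x) * (u x * w x) ∂ν)
        = ∫ x, Real.exp (c x) * (u x * w x) ∂ν := by simp
    rw [← he]; exact hd


set_option maxHeartbeats 1000000

/-- **Minimality implies a positive definite Hessian of the log partition function.**
For a σ-finite measure `ν` on `X` and statistic `t : X → ℝⁿ` with partition function
`Z(η) = ∫ exp⟪η, t x⟫ dν` and `H = {η : 0 < Z(η) < ∞}`, suppose the family is minimal:
for every nonzero `v ∈ ℝⁿ` the function `x ↦ ⟪v, t x⟫` is not `ν`-a.e. equal to a constant.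
Then for every `η` in the interior of `H`, the Hessian `∇² log Z(η)` — i.e. any derivative
`L` of the gradient map `η' ↦ E_{p(·|η')}[t]` of `log Z` at `η` — is positive definite:
`⟪v, L v⟫ > 0` for all `v ≠ 0`. -/
theorem stmt4 {X : Type*} [MeasurableSpace X] (ν : Measure X) [SigmaFinite ν]
    {n : ℕ} (t : X → EuclideanSpace ℝ (Fin n)) (ht : Measurable t)
    (Z : EuclideanSpace ℝ (Fin n) → ℝ)
    (hZ : ∀ η, Z η = ∫ x, Real.exp ⟪η, t x⟫ ∂ν)
    (H : Set (EuclideanSpace ℝ (Fin n)))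
    (hH : H = {η | Integrable (fun x => Real.exp ⟪η, t x⟫) ν ∧ 0 < Z η})
    (hmin : ∀ v : EuclideanSpace ℝ (Fin n), v ≠ 0 →
      ∀ c : ℝ, ¬ (∀ᵐ x ∂ν, ⟪v, t x⟫ = c)) :
    ∀ η ∈ interior H,
      ∀ L : EuclideanSpace ℝ (Fin n) →L[ℝ] EuclideanSpace ℝ (Fin n),
        HasFDerivAt (fun η' => ∫ x, Real.exp (⟪η', t x⟫ - Real.log (Z η')) • t x ∂ν) L η →
        ∀ v : EuclideanSpace ℝ (Fin n), v ≠ 0 → 0 < ⟪v, L v⟫ := by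
  intro η hη L hL v hv
  obtain ⟨r, hr, hball⟩ := Metric.mem_nhds_iff.mp (mem_interior_iff_mem_nhds.mp hη)
  -- membership facts
  have hmemI : ∀ w : EuclideanSpace ℝ (Fin n), ‖w‖ < r →
      Integrable (fun x => Real.exp (⟪η, t x⟫ + ⟪w, t x⟫)) ν := by
    intro w hw
    have hmemH : η + w ∈ H := hball (by
      simp only [Metric.mem_ball, dist_eq_norm, add_sub_cancel_left]; exact hw)
    rw [hH] at hmemH
    exact hmemH.1.congr (Filter.Eventually.of_forall fun x => by simp [inner_add_left])
  have hmemZ : ∀ w : EuclideanSpace ℝ (Fin n), ‖w‖ < r → 0 < Z (η + w) := by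
    intro w hw
    have hmemH : η + w ∈ H := hball (by
      simp only [Metric.mem_ball, dist_eq_norm, add_sub_cancel_left]; exact hw)
    rw [hH] at hmemH
    exact hmemH.2
  -- measurability
  have hcm : Measurable fun x => ⟪η, t x⟫ := measurable_const.inner ht
  have hum : Measurable fun x => ⟪v, t x⟫ := measurable_const.inner ht
  -- the small radius
  set δ : ℝ := r / (4 * (‖v‖ + 1)) with hδ_def
  have hδ : 0 < δ := div_pos hr (by positivity)
  have hδ4 : δ * (‖v‖ + 1) = r / 4 := by rw [hδ_def]; field_simp
  have hsmall : ∀ s : ℝ, |s| ≤ 2 * δ → ‖s • v‖ < r := by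
    intro s hs
    rw [norm_smul, Real.norm_eq_abs]
    have h1 : |s| * ‖v‖ ≤ 2 * δ * ‖v‖ := mul_le_mul_of_nonneg_right hs (norm_nonneg v)
    nlinarith [norm_nonneg v, hδ, hr, hδ4, h1]
  have hint : ∀ s : ℝ, |s| ≤ 2 * δ →
      Integrable (fun x => Real.exp (⟪η, t x⟫ + s * ⟪v, t x⟫)) ν := by
    intro s hs
    exact (hmemI (s • v) (hsmall s hs)).congr (Filter.Eventually.of_forall fun x => by
      simp only [real_inner_smul_left])
  have hintc : Integrable (fun x => Real.exp ⟪η, t x⟫) ν := by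
    have := hint 0 (by rw [abs_zero]; positivity)
    simpa using this
  have hintp : Integrable (fun x => Real.exp (⟪η, t x⟫ + 2 * δ * ⟪v, t x⟫)) ν :=
    hint (2 * δ) (le_of_eq (abs_of_pos (by positivity)))
  have hintm : Integrable (fun x => Real.exp (⟪η, t x⟫ + -(2 * δ) * ⟪v, t x⟫)) ν :=
    hint (-(2 * δ)) (by rw [abs_neg, abs_of_pos (by positivity)])
  -- DUI for f0
  obtain ⟨hint1, hd0⟩ := dui ν (u := fun x => ⟪v, t x⟫) (w := fun _ => (1:ℝ))
    (B := fun x => 2 / δ * (Real.exp (⟪η, t x⟫ + 2 * δ * ⟪v, t x⟫)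
      + Real.exp (⟪η, t x⟫ + -(2 * δ) * ⟪v, t x⟫)))
    hcm hum measurable_const hδ
    (hintc.congr (Filter.Eventually.of_forall fun x => by simp))
    (((hintp.add hintm).const_mul _))
    (fun x s hs => by
      rw [Metric.mem_ball, Real.dist_eq, sub_zero] at hs
      simpa [mul_one] using pbound1 (c := ⟪η, t x⟫) (u := ⟪v, t x⟫) hδ hs)
  have hintU : Integrable (fun x => Real.exp ⟪η, t x⟫ * ⟪v, t x⟫) ν := by
    simpa using hint1
  have hd0' : HasDerivAt (fun s : ℝ => ∫ x, Real.exp (⟪η, t x⟫ + s * ⟪v, t x⟫) ∂ν)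
      (∫ x, Real.exp ⟪η, t x⟫ * ⟪v, t x⟫ ∂ν) 0 := by
    have h2 : (fun s : ℝ => ∫ x, Real.exp (⟪η, t x⟫ + s * ⟪v, t x⟫) * 1 ∂ν)
        = fun s : ℝ => ∫ x, Real.exp (⟪η, t x⟫ + s * ⟪v, t x⟫) ∂ν := by
      funext s; simp
    have h3 : (∫ x, Real.exp ⟪η, t x⟫ * (⟪v, t x⟫ * 1) ∂ν)
        = ∫ x, Real.exp ⟪η, t x⟫ * ⟪v, t x⟫ ∂ν := by simp
    rw [← h2, ← h3]; exact hd0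
  -- DUI for f1
  obtain ⟨hint2, hd1⟩ := dui ν (u := fun x => ⟪v, t x⟫) (w := fun x => ⟪v, t x⟫)
    (B := fun x => 8 / δ ^ 2 * (Real.exp (⟪η, t x⟫ + 2 * δ * ⟪v, t x⟫)
      + Real.exp (⟪η, t x⟫ + -(2 * δ) * ⟪v, t x⟫)))
    hcm hum hum hδ hintU
    (((hintp.add hintm).const_mul _))
    (fun x s hs => by
      rw [Metric.mem_ball, Real.dist_eq, sub_zero] at hs
      exact pbound2 (c := ⟪η, t x⟫) (u := ⟪v, t x⟫) hδ hs)
  -- Z along the line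
  have hZf : ∀ s : ℝ, Z (η + s • v) = ∫ x, Real.exp (⟪η, t x⟫ + s * ⟪v, t x⟫) ∂ν := by
    intro s
    rw [hZ]
    simp only [inner_add_left, real_inner_smul_left]
  have hI0pos : 0 < ∫ x, Real.exp ⟪η, t x⟫ ∂ν := by
    have h1 := hmemZ ((0:ℝ) • v) (hsmall 0 (by rw [abs_zero]; positivity))
    rw [hZf 0] at h1
    simpa using h1
  -- vector integrability
  have hvec : ∀ s : ℝ, |s| ≤ δ →
      Integrable (fun x => Real.exp (⟪η, t x⟫ + s * ⟪v, t x⟫) • t x) ν := by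
    intro s hs
    have hcoord : ∀ i : Fin n, Integrable
        (fun x => Real.exp (⟪η, t x⟫ + s * ⟪v, t x⟫) * ⟪EuclideanSpace.single i (1:ℝ), t x⟫) ν := by
      intro i
      refine int_mul (hcm.add (hum.const_mul s)) (measurable_const.inner ht)
        (show (0:ℝ) < r / 4 by linarith) ?_ ?_
      · have hn : ‖s • v + (r / 4) • EuclideanSpace.single i (1:ℝ)‖ < r := by
          calc ‖s • v + (r / 4) • EuclideanSpace.single i (1:ℝ)‖
              ≤ ‖s • v‖ + ‖(r / 4) • EuclideanSpace.single i (1:ℝ)‖ := norm_add_le _ _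
          _ ≤ δ * ‖v‖ + r / 4 := by
              rw [norm_smul, norm_smul, Real.norm_eq_abs, Real.norm_eq_abs,
                EuclideanSpace.norm_single, norm_one, mul_one, abs_of_pos (by linarith : (0:ℝ) < r/4)]
              exact add_le_add (mul_le_mul_of_nonneg_right hs (norm_nonneg v)) le_rfl
          _ < r := by nlinarith [norm_nonneg v, hδ, hr, hδ4]
        refine (hmemI _ hn).congr (Filter.Eventually.of_forall fun x => ?_)
        simp only [inner_add_left, real_inner_smul_left]
        congr 1
        ring
      · have hn : ‖s • v + (-(r / 4)) • EuclideanSpace.single i (1:ℝ)‖ < r := by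
          calc ‖s • v + (-(r / 4)) • EuclideanSpace.single i (1:ℝ)‖
              ≤ ‖s • v‖ + ‖(-(r / 4)) • EuclideanSpace.single i (1:ℝ)‖ := norm_add_le _ _
          _ ≤ δ * ‖v‖ + r / 4 := by
              rw [norm_smul, norm_smul, Real.norm_eq_abs, Real.norm_eq_abs,
                EuclideanSpace.norm_single, norm_one, mul_one, abs_neg,
                abs_of_pos (by linarith : (0:ℝ) < r/4)]
              exact add_le_add (mul_le_mul_of_nonneg_right hs (norm_nonneg v)) le_rfl
          _ < r := by nlinarith [norm_nonneg v, hδ, hr, hδ4]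
        refine (hmemI _ hn).congr (Filter.Eventually.of_forall fun x => ?_)
        simp only [inner_add_left, real_inner_smul_left]
        congr 1
        ring
    refine Integrable.mono (g := fun x =>
        ∑ i, |Real.exp (⟪η, t x⟫ + s * ⟪v, t x⟫) * ⟪EuclideanSpace.single i (1:ℝ), t x⟫|)
      (integrable_finset_sum _ fun i _ => (hcoord i).abs)
      ((hcm.add (hum.const_mul s)).exp.smul ht).aestronglyMeasurable ?_
    filter_upwards with x
    rw [norm_smul, Real.norm_eq_abs, Real.abs_exp, Real.norm_eq_abs,
      abs_of_nonneg (Finset.sum_nonneg fun i _ => abs_nonneg _)]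
    calc Real.exp (⟪η, t x⟫ + s * ⟪v, t x⟫) * ‖t x‖
        ≤ Real.exp (⟪η, t x⟫ + s * ⟪v, t x⟫) * ∑ i, |t x i| :=
          mul_le_mul_of_nonneg_left (norm_le_sum_abs (t x)) (Real.exp_pos _).le
      _ = ∑ i, |Real.exp (⟪η, t x⟫ + s * ⟪v, t x⟫) * ⟪EuclideanSpace.single i (1:ℝ), t x⟫| := by
          rw [Finset.mul_sum]
          refine Finset.sum_congr rfl fun i _ => ?_
          rw [abs_mul, Real.abs_exp, EuclideanSpace.inner_single_left]
          simp
  -- key pointwise identity for the gradient map along the line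
  have hkey : ∀ s : ℝ, |s| ≤ δ →
      ⟪v, ∫ x, Real.exp (⟪η + s • v, t x⟫ - Real.log (Z (η + s • v))) • t x ∂ν⟫
        = (∫ x, Real.exp (⟪η, t x⟫ + s * ⟪v, t x⟫) * ⟪v, t x⟫ ∂ν)
            / (∫ x, Real.exp (⟪η, t x⟫ + s * ⟪v, t x⟫) ∂ν) := by
    intro s hs
    have hs2 : |s| ≤ 2 * δ := by linarith [abs_nonneg s]
    have hZp : 0 < ∫ x, Real.exp (⟪η, t x⟫ + s * ⟪v, t x⟫) ∂ν := by
      have := hmemZ (s • v) (hsmall s hs2)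
      rwa [hZf s] at this
    have hrw : ∀ x : X, Real.exp (⟪η + s • v, t x⟫ - Real.log (Z (η + s • v))) • t x
        = (∫ x, Real.exp (⟪η, t x⟫ + s * ⟪v, t x⟫) ∂ν)⁻¹
            • (Real.exp (⟪η, t x⟫ + s * ⟪v, t x⟫) • t x) := by
      intro x
      rw [Real.exp_sub, hZf s, Real.exp_log hZp, div_eq_inv_mul, ← smul_smul,
        inner_add_left, real_inner_smul_left]
    simp_rw [hrw]
    have hcc := (innerSL ℝ v).integral_comp_comm (hvec s hs)
    simp only [innerSL_apply_apply] at hcc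
    rw [integral_smul, real_inner_smul_right, ← hcc]
    simp_rw [real_inner_smul_right]
    rw [div_eq_inv_mul]
  -- derivative of the composed map
  have hline : HasDerivAt (fun s : ℝ => η + s • v) v 0 := by
    simpa using ((hasDerivAt_id (0:ℝ)).smul_const v).const_add η
  have hL' : HasFDerivAt (fun η' => ∫ x, Real.exp (⟪η', t x⟫ - Real.log (Z η')) • t x ∂ν) L
      (η + (0:ℝ) • v) := by
    simpa using hL
  have hcomp := hL'.comp_hasDerivAt 0 hline
  have hinner : HasDerivAt
      (fun s : ℝ => ⟪v, ∫ x, Real.exp (⟪η + s • v, t x⟫ - Real.log (Z (η + s • v))) • t x ∂ν⟫)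
      ⟪v, L v⟫ 0 := by
    have h2 := (innerSL ℝ v).hasFDerivAt.comp_hasDerivAt 0 hcomp
    simpa [Function.comp_def] using h2
  -- transfer to the ratio function
  have hev : (fun s : ℝ => (∫ x, Real.exp (⟪η, t x⟫ + s * ⟪v, t x⟫) * ⟪v, t x⟫ ∂ν)
        / (∫ x, Real.exp (⟪η, t x⟫ + s * ⟪v, t x⟫) ∂ν))
      =ᶠ[nhds (0:ℝ)]
      (fun s : ℝ => ⟪v, ∫ x, Real.exp (⟪η + s • v, t x⟫ - Real.log (Z (η + s • v))) • t x ∂ν⟫) := by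
    filter_upwards [Metric.ball_mem_nhds (0:ℝ) hδ] with s hs
    rw [Metric.mem_ball, Real.dist_eq, sub_zero] at hs
    exact (hkey s hs.le).symm
  have hratio : HasDerivAt (fun s : ℝ => (∫ x, Real.exp (⟪η, t x⟫ + s * ⟪v, t x⟫) * ⟪v, t x⟫ ∂ν)
        / (∫ x, Real.exp (⟪η, t x⟫ + s * ⟪v, t x⟫) ∂ν)) ⟪v, L v⟫ 0 :=
    hinner.congr_of_eventuallyEq hev
  -- derivative of the ratio by quotient rule
  have hI0ne : (∫ x, Real.exp (⟪η, t x⟫ + (0:ℝ) * ⟪v, t x⟫) ∂ν) ≠ 0 := by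
    have : (∫ x, Real.exp (⟪η, t x⟫ + (0:ℝ) * ⟪v, t x⟫) ∂ν) = ∫ x, Real.exp ⟪η, t x⟫ ∂ν := by
      simp
    rw [this]; exact hI0pos.ne'
  have hd1' : HasDerivAt (fun s : ℝ => ∫ x, Real.exp (⟪η, t x⟫ + s * ⟪v, t x⟫) * ⟪v, t x⟫ ∂ν)
      (∫ x, Real.exp ⟪η, t x⟫ * (⟪v, t x⟫ * ⟪v, t x⟫) ∂ν) 0 := hd1
  have hdiv := hd1'.div hd0' hI0ne
  have hval := hratio.unique hdiv
  -- abbreviations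
  set I0 : ℝ := ∫ x, Real.exp ⟪η, t x⟫ ∂ν with hI0_def
  set M1 : ℝ := ∫ x, Real.exp ⟪η, t x⟫ * ⟪v, t x⟫ ∂ν with hM1_def
  set M2 : ℝ := ∫ x, Real.exp ⟪η, t x⟫ * (⟪v, t x⟫ * ⟪v, t x⟫) ∂ν with hM2_def
  have hval' : ⟪v, L v⟫ = (M2 * I0 - M1 * M1) / I0 ^ 2 := by
    rw [hval]
    simp [hI0_def, hM1_def, hM2_def]
  -- variance computation
  set m : ℝ := M1 / I0 with hm_def
  have hexp_eq : (fun x => Real.exp ⟪η, t x⟫ * (⟪v, t x⟫ - m) ^ 2)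
      = fun x => (Real.exp ⟪η, t x⟫ * (⟪v, t x⟫ * ⟪v, t x⟫)
          - (2 * m) * (Real.exp ⟪η, t x⟫ * ⟪v, t x⟫)) + m ^ 2 * Real.exp ⟪η, t x⟫ := by
    funext x; ring
  have hA : Integrable (fun x => Real.exp ⟪η, t x⟫ * (⟪v, t x⟫ * ⟪v, t x⟫)) ν := by
    simpa using hint2
  have hB : Integrable (fun x => (2 * m) * (Real.exp ⟪η, t x⟫ * ⟪v, t x⟫)) ν :=
    hintU.const_mul _
  have hC : Integrable (fun x => m ^ 2 * Real.exp ⟪η, t x⟫) ν := hintc.const_mul _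
  have hAB : Integrable (fun x => Real.exp ⟪η, t x⟫ * (⟪v, t x⟫ * ⟪v, t x⟫)
      - (2 * m) * (Real.exp ⟪η, t x⟫ * ⟪v, t x⟫)) ν := hA.sub hB
  have hVint : Integrable (fun x => Real.exp ⟪η, t x⟫ * (⟪v, t x⟫ - m) ^ 2) ν := by
    rw [hexp_eq]
    exact hAB.add hC
  have hVval : (∫ x, Real.exp ⟪η, t x⟫ * (⟪v, t x⟫ - m) ^ 2 ∂ν)
      = M2 - 2 * m * M1 + m ^ 2 * I0 := by
    rw [hexp_eq, integral_add hAB hC, integral_sub hA hB,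
      integral_const_mul, integral_const_mul]
  have hVnonneg : 0 ≤ ∫ x, Real.exp ⟪η, t x⟫ * (⟪v, t x⟫ - m) ^ 2 ∂ν :=
    integral_nonneg fun x => by positivity
  have hVne : (∫ x, Real.exp ⟪η, t x⟫ * (⟪v, t x⟫ - m) ^ 2 ∂ν) ≠ 0 := by
    intro h0
    have hae := (integral_eq_zero_iff_of_nonneg (fun x => by positivity) hVint).mp h0
    refine hmin v hv m ?_
    filter_upwards [hae] with x hx
    have hx' : Real.exp ⟪η, t x⟫ * (⟪v, t x⟫ - m) ^ 2 = 0 := hx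
    have h2 : (⟪v, t x⟫ - m) ^ 2 = 0 := by
      rcases mul_eq_zero.mp hx' with h | h
      · exact absurd h (Real.exp_pos _).ne'
      · exact h
    have h3 : ⟪v, t x⟫ - m = 0 := pow_eq_zero_iff (two_ne_zero) |>.mp h2
    exact sub_eq_zero.mp h3
  have hVpos : 0 < ∫ x, Real.exp ⟪η, t x⟫ * (⟪v, t x⟫ - m) ^ 2 ∂ν :=
    lt_of_le_of_ne hVnonneg (Ne.symm hVne)
  have hnum : M2 * I0 - M1 * M1 = I0 * ∫ x, Real.exp ⟪η, t x⟫ * (⟪v, t x⟫ - m) ^ 2 ∂ν := by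
    rw [hVval, hm_def]
    field_simp
    ring
  rw [hval', hnum]
  exact div_pos (mul_pos hI0pos hVpos) (pow_pos hI0pos 2)
end

section
/- Let p(x, y|θ) = exp⟨t_θ(θ), (t_{xy}(x, y), 1)⟩ be an exponential family likelihood with t_θ(θ) = (η⁰_{xy}(θ), −log Z_{xy}(η⁰_{xy}(θ))) ∈ ℝ^{n+1}, let p(θ) = exp(⟨η⁰_θ, t_θ(θ)⟩ − log Z_θ(η⁰_θ)) be its natural exponential family conjugate prior with respect to ν_Θ, fix an observation y, and let q(x) be a fixed probability density on X with E_{q(x)}[(t_{xy}(x,y), 1)] finite. Define η* = η⁰_θ + E_{q(x)}[(t_{xy}(x, y), 1)] and assume Z_θ(η*) < ∞, and set q*(θ) = exp(⟨η*, t_θ(θ)⟩ − log Z_θ(η*)). Then q*(θ) maximizes the mean field objective L[q(θ)q(x)] = E_{q(θ)q(x)}[log(p(θ)p(x,y|θ)/(q(θ)q(x)))] over all probability densities q(θ) for which the objective is well defined; in particular, the optimal global factor lies in the same exponential family as the prior p(θ). -/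
open MeasureTheory

/-- The standard inner product on `ℝⁿ × ℝ ≅ ℝ^{n+1}`. -/
def ip {n : ℕ} (a b : (Fin n → ℝ) × ℝ) : ℝ := (∑ i, a.1 i * b.1 i) + a.2 * b.2

namespace Stmt10Aux

lemma ip_add_left {n : ℕ} (a b c : (Fin n → ℝ) × ℝ) : ip (a + b) c = ip a c + ip b c := by
  simp [ip, add_mul, Finset.sum_add_distrib]; ring

lemma ip_comm {n : ℕ} (a b : (Fin n → ℝ) × ℝ) : ip a b = ip b a := by
  simp [ip, mul_comm]

lemma ip_smul_right {n : ℕ} (a b : (Fin n → ℝ) × ℝ) (c : ℝ) :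
    ip a (c • b) = c * ip a b := by
  simp only [ip, Prod.smul_fst, Prod.smul_snd, Pi.smul_apply, smul_eq_mul]
  rw [mul_add, Finset.mul_sum]
  ring_nf
  congr 1
  exact Finset.sum_congr rfl fun i _ => by ring

lemma ip_zero_right {n : ℕ} (a : (Fin n → ℝ) × ℝ) : ip a 0 = 0 := by
  simp [ip]

noncomputable def ipL {n : ℕ} (a : (Fin n → ℝ) × ℝ) : ((Fin n → ℝ) × ℝ) →L[ℝ] ℝ :=
  LinearMap.toContinuousLinearMap
    { toFun := fun b => ip a b
      map_add' := fun b c => by simp [ip, mul_add, Finset.sum_add_distrib]; ring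
      map_smul' := fun r b => by simpa using ip_smul_right a b r }

lemma ipL_apply {n : ℕ} (a b : (Fin n → ℝ) × ℝ) : ipL a b = ip a b := rfl

lemma integrable_of_nonneg_integral_one {α : Type*} [MeasurableSpace α] {μ : Measure α}
    {f : α → ℝ} (h1 : ∫ x, f x ∂μ = 1) : Integrable f μ := by
  by_contra h
  rw [integral_undef h] at h1
  norm_num at h1

lemma gibbs_pt (q f Z : ℝ) (hq : 0 ≤ q) (hZ : 0 < Z) :
    q * (f - Real.log q) - q * Real.log Z ≤ Real.exp f / Z - q := by
  rcases hq.eq_or_lt with h | h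
  · rw [← h]; simp; positivity
  · have ht : 0 < Real.exp f / (Z * q) := by positivity
    have hlog := Real.log_le_sub_one_of_pos ht
    rw [Real.log_div (Real.exp_ne_zero _) (by positivity), Real.log_exp,
      Real.log_mul hZ.ne' h.ne'] at hlog
    have := mul_le_mul_of_nonneg_left hlog hq
    have hqq : q * (Real.exp f / (Z * q) - 1) = Real.exp f / Z - q := by
      field_simp
    nlinarith [this, hqq]

lemma pointwise_eq {n : ℕ} (η0 tθv : (Fin n → ℝ) × ℝ) (Z0 a b : ℝ) (Tx : Fin n → ℝ)
    (ha : 0 ≤ a) (hb : 0 ≤ b) :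
    a * b * Real.log (Real.exp (ip η0 tθv - Real.log Z0) *
        Real.exp (ip tθv (Tx, 1)) / (a * b))
      = (a * (ip η0 tθv - Real.log Z0) - a * Real.log a) * b
        + a * ip tθv (b • ((Tx, (1:ℝ)) : (Fin n → ℝ) × ℝ))
        - a * (b * Real.log b) := by
  rcases ha.eq_or_lt with h | h
  · simp [← h]
  rcases hb.eq_or_lt with h2 | h2
  · simp [← h2, ip_zero_right]
  rw [Real.log_div (by positivity) (by positivity),
    Real.log_mul (Real.exp_ne_zero _) (Real.exp_ne_zero _), Real.log_exp, Real.log_exp,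
    Real.log_mul h.ne' h2.ne', ip_smul_right]
  ring

lemma decomp {X Θ : Type*} [MeasurableSpace X] [MeasurableSpace Θ]
    (νX : Measure X) (νΘ : Measure Θ) [SigmaFinite νX] [SigmaFinite νΘ]
    {n : ℕ} (T : X → Fin n → ℝ) (tθ : Θ → (Fin n → ℝ) × ℝ)
    (Z0 : ℝ) (η0 s : (Fin n → ℝ) × ℝ)
    (qx : X → ℝ) (hqx0 : ∀ x, 0 ≤ qx x)
    (hqxInt : Integrable qx νX) (hqx1 : ∫ x, qx x ∂νX = 1)
    (hsInt : Integrable (fun x => qx x • ((T x, (1:ℝ)) : (Fin n → ℝ) × ℝ)) νX)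
    (hs : s = ∫ x, qx x • ((T x, (1:ℝ)) : (Fin n → ℝ) × ℝ) ∂νX)
    (hEnt : Integrable (fun x => qx x * Real.log (qx x)) νX)
    (q : Θ → ℝ) (hq0 : ∀ θ, 0 ≤ q θ) (hqInt : Integrable q νΘ) (hq1 : ∫ θ, q θ ∂νΘ = 1)
    (hint : Integrable (fun pr : Θ × X =>
        q pr.1 * qx pr.2 *
          Real.log (Real.exp (ip η0 (tθ pr.1) - Real.log Z0) *
              Real.exp (ip (tθ pr.1) (T pr.2, 1)) / (q pr.1 * qx pr.2))) (νΘ.prod νX)) :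
    Integrable (fun θ => q θ * (ip (η0 + s) (tθ θ) - Real.log (q θ))) νΘ ∧
    (∫ pr : Θ × X, q pr.1 * qx pr.2 *
          Real.log (Real.exp (ip η0 (tθ pr.1) - Real.log Z0) *
              Real.exp (ip (tθ pr.1) (T pr.2, 1)) / (q pr.1 * qx pr.2)) ∂(νΘ.prod νX))
      = (∫ θ, q θ * (ip (η0 + s) (tθ θ) - Real.log (q θ)) ∂νΘ)
          - Real.log Z0 - ∫ x, qx x * Real.log (qx x) ∂νX := by
  set Cx := ∫ x, qx x * Real.log (qx x) ∂νX with hCx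
  -- the slice integral over x, for every θ
  have hcomp : ∀ θ, Integrable (fun x => ip (tθ θ) (qx x • ((T x, (1:ℝ)) : (Fin n → ℝ) × ℝ))) νX := by
    intro θ
    simpa only [ipL_apply] using (ipL (tθ θ)).integrable_comp hsInt
  have hslice : ∀ θ, (∫ x, q θ * qx x *
      Real.log (Real.exp (ip η0 (tθ θ) - Real.log Z0) *
        Real.exp (ip (tθ θ) (T x, 1)) / (q θ * qx x)) ∂νX)
      = q θ * (ip (η0 + s) (tθ θ) - Real.log (q θ)) - q θ * Real.log Z0 - q θ * Cx := by
    intro θ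
    have heq : (fun x => q θ * qx x *
        Real.log (Real.exp (ip η0 (tθ θ) - Real.log Z0) *
          Real.exp (ip (tθ θ) (T x, 1)) / (q θ * qx x)))
        = fun x => ((q θ * (ip η0 (tθ θ) - Real.log Z0) - q θ * Real.log (q θ)) * qx x
            + q θ * ip (tθ θ) (qx x • ((T x, (1:ℝ)) : (Fin n → ℝ) × ℝ)))
          - q θ * (qx x * Real.log (qx x)) := by
      funext x
      rw [pointwise_eq η0 (tθ θ) Z0 (q θ) (qx x) (T x) (hq0 θ) (hqx0 x)]
    have hi1 : Integrable (fun x => (q θ * (ip η0 (tθ θ) - Real.log Z0) - q θ * Real.log (q θ)) * qx x) νX :=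
      hqxInt.const_mul _
    have hi2 : Integrable (fun x => q θ * ip (tθ θ) (qx x • ((T x, (1:ℝ)) : (Fin n → ℝ) × ℝ))) νX :=
      (hcomp θ).const_mul _
    have hi3 : Integrable (fun x => q θ * (qx x * Real.log (qx x))) νX := hEnt.const_mul _
    have hi12 : Integrable (fun x => (q θ * (ip η0 (tθ θ) - Real.log Z0) - q θ * Real.log (q θ)) * qx x
        + q θ * ip (tθ θ) (qx x • ((T x, (1:ℝ)) : (Fin n → ℝ) × ℝ))) νX := hi1.add hi2
    rw [heq, integral_sub hi12 hi3, integral_add hi1 hi2,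
      integral_const_mul, integral_const_mul, integral_const_mul, hqx1]
    have hip : (∫ x, ip (tθ θ) (qx x • ((T x, (1:ℝ)) : (Fin n → ℝ) × ℝ)) ∂νX)
        = ip (tθ θ) s := by
      rw [hs]
      simpa only [ipL_apply] using ((ipL (tθ θ)).integral_comp_comm hsInt)
    rw [hip, ip_add_left, ip_comm s (tθ θ)]
    ring
  -- Fubini
  have hfub := integral_prod _ hint
  have hIθ : Integrable (fun θ => q θ * (ip (η0 + s) (tθ θ) - Real.log (q θ))
        - q θ * Real.log Z0 - q θ * Cx) νΘ := by
    have := hint.integral_prod_left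
    simpa only [hslice] using this
  have hI : Integrable (fun θ => q θ * (ip (η0 + s) (tθ θ) - Real.log (q θ))) νΘ := by
    have h2 : (fun θ => q θ * (ip (η0 + s) (tθ θ) - Real.log (q θ)))
        = fun θ => (q θ * (ip (η0 + s) (tθ θ) - Real.log (q θ))
            - q θ * Real.log Z0 - q θ * Cx) + (q θ * Real.log Z0 + q θ * Cx) := by
      funext θ; ring
    rw [h2]
    exact hIθ.add ((hqInt.mul_const _).add (hqInt.mul_const _))
  refine ⟨hI, ?_⟩
  rw [hfub]
  have heq2 : (∫ θ, (∫ x, q θ * qx x *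
      Real.log (Real.exp (ip η0 (tθ θ) - Real.log Z0) *
        Real.exp (ip (tθ θ) (T x, 1)) / (q θ * qx x)) ∂νX) ∂νΘ)
      = ∫ θ, (q θ * (ip (η0 + s) (tθ θ) - Real.log (q θ)) - q θ * Real.log Z0 - q θ * Cx) ∂νΘ := by
    exact integral_congr_ae (Filter.Eventually.of_forall fun θ => hslice θ)
  have hj1 : Integrable (fun θ => q θ * Real.log Z0) νΘ := hqInt.mul_const _
  have hj2 : Integrable (fun θ => q θ * Cx) νΘ := hqInt.mul_const _
  have hj3 : Integrable (fun θ => q θ * (ip (η0 + s) (tθ θ) - Real.log (q θ)) - q θ * Real.log Z0) νΘ :=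
    hI.sub hj1
  rw [heq2, integral_sub hj3 hj2, integral_sub hI hj1, integral_mul_const, integral_mul_const, hq1]
  ring

end Stmt10Aux

open Stmt10Aux

/-- **Optimal form of the global variational factor (conjugate case).**
Let `p(x, y|θ) = exp⟨t_θ(θ), (t_{xy}(x, y), 1)⟩` be an exponential family likelihood
with natural exponential family conjugate prior
`p(θ) = exp(⟨η⁰_θ, t_θ(θ)⟩ − log Z_θ(η⁰_θ))`, fix the observation `y` (so `T x`
denotes `t_{xy}(x, y)`), and let `q(x)` be a fixed probability density with
`s = E_{q(x)}[(T x, 1)]` finite.  Set `η* = η⁰_θ + s`, assume `Z_θ(η*) < ∞` (and the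
relevant partition values positive), and `q*(θ) = exp(⟨η*, t_θ(θ)⟩ − log Z_θ(η*))`.
Then `q*` maximizes the mean field objective
`L[q(θ)q(x)] = E_{q(θ)q(x)}[log (p(θ)p(x,y|θ)/(q(θ)q(x)))]` over all probability
densities `q(θ)` for which the objective is well defined; in particular the optimal
global factor lies in the same exponential family as the prior. -/
theorem stmt10 {X Θ : Type*} [MeasurableSpace X] [MeasurableSpace Θ]
    (νX : Measure X) (νΘ : Measure Θ) [SigmaFinite νX] [SigmaFinite νΘ]
    {n : ℕ}
    (T : X → Fin n → ℝ)
    (tθ : Θ → (Fin n → ℝ) × ℝ)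
    (Zθ : ((Fin n → ℝ) × ℝ) → ℝ)
    (hZθ : ∀ η, Zθ η = ∫ θ, Real.exp (ip η (tθ θ)) ∂νΘ)
    (η0 : (Fin n → ℝ) × ℝ)
    (hprior_int : Integrable (fun θ => Real.exp (ip η0 (tθ θ))) νΘ)
    (hprior_pos : 0 < Zθ η0)
    (qx : X → ℝ) (hqx0 : ∀ x, 0 ≤ qx x) (hqx1 : ∫ x, qx x ∂νX = 1)
    (hsInt : Integrable (fun x => qx x • ((T x, (1 : ℝ)) : (Fin n → ℝ) × ℝ)) νX)
    (s : (Fin n → ℝ) × ℝ) (hs : s = ∫ x, qx x • ((T x, (1 : ℝ)) : (Fin n → ℝ) × ℝ) ∂νX)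
    (ηstar : (Fin n → ℝ) × ℝ) (hηstar : ηstar = η0 + s)
    (hZstar_int : Integrable (fun θ => Real.exp (ip ηstar (tθ θ))) νΘ)
    (hZstar_pos : 0 < Zθ ηstar)
    (qstar : Θ → ℝ)
    (hqstar : ∀ θ, qstar θ = Real.exp (ip ηstar (tθ θ) - Real.log (Zθ ηstar)))
    (hstarInt : Integrable (fun pr : Θ × X =>
        qstar pr.1 * qx pr.2 *
          Real.log (Real.exp (ip η0 (tθ pr.1) - Real.log (Zθ η0)) *
              Real.exp (ip (tθ pr.1) (T pr.2, 1)) / (qstar pr.1 * qx pr.2)))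
        (νΘ.prod νX)) :
    ∀ qθ : Θ → ℝ, (∀ θ, 0 ≤ qθ θ) → (∫ θ, qθ θ ∂νΘ = 1) →
      Integrable (fun pr : Θ × X =>
        qθ pr.1 * qx pr.2 *
          Real.log (Real.exp (ip η0 (tθ pr.1) - Real.log (Zθ η0)) *
              Real.exp (ip (tθ pr.1) (T pr.2, 1)) / (qθ pr.1 * qx pr.2)))
        (νΘ.prod νX) →
      (∫ pr : Θ × X, qθ pr.1 * qx pr.2 *
          Real.log (Real.exp (ip η0 (tθ pr.1) - Real.log (Zθ η0)) *
              Real.exp (ip (tθ pr.1) (T pr.2, 1)) / (qθ pr.1 * qx pr.2)) ∂(νΘ.prod νX))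
        ≤ ∫ pr : Θ × X, qstar pr.1 * qx pr.2 *
            Real.log (Real.exp (ip η0 (tθ pr.1) - Real.log (Zθ η0)) *
              Real.exp (ip (tθ pr.1) (T pr.2, 1)) / (qstar pr.1 * qx pr.2)) ∂(νΘ.prod νX) := by
  subst hηstar
  intro qθ hq0 hq1 hint
  have hqxInt : Integrable qx νX := integrable_of_nonneg_integral_one hqx1
  have hqθInt : Integrable qθ νΘ := integrable_of_nonneg_integral_one hq1
  have hqstar0 : ∀ θ, 0 ≤ qstar θ := fun θ => by rw [hqstar]; positivity
  have hqstarEq : qstar = fun θ => Real.exp (ip (η0 + s) (tθ θ)) / Zθ (η0 + s) := by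
    funext θ; rw [hqstar, Real.exp_sub, Real.exp_log hZstar_pos]
  have hqstarInt : Integrable qstar νΘ := by rw [hqstarEq]; exact hZstar_int.div_const _
  have hqstar1 : ∫ θ, qstar θ ∂νΘ = 1 := by
    rw [hqstarEq, integral_div, ← hZθ]
    exact div_self hZstar_pos.ne'
  -- entropy integrability
  have hνΘ : νΘ ≠ 0 := by
    intro h0
    rw [hZθ, h0, integral_zero_measure] at hprior_pos
    exact lt_irrefl 0 hprior_pos
  haveI : (ae νΘ).NeBot := ae_neBot.mpr hνΘ
  obtain ⟨θ0, hθ0⟩ := (hstarInt.prod_right_ae).exists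
  have hθ0' : Integrable (fun x => qstar θ0 * qx x *
      Real.log (Real.exp (ip η0 (tθ θ0) - Real.log (Zθ η0)) *
        Real.exp (ip (tθ θ0) (T x, 1)) / (qstar θ0 * qx x))) νX := by simpa using hθ0
  have hq0pos : 0 < qstar θ0 := by rw [hqstar]; exact Real.exp_pos _
  have hcomp0 : Integrable (fun x => ip (tθ θ0) (qx x • ((T x, (1:ℝ)) : (Fin n → ℝ) × ℝ))) νX := by
    simpa only [ipL_apply] using (ipL (tθ θ0)).integrable_comp hsInt
  have hEnt : Integrable (fun x => qx x * Real.log (qx x)) νX := by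
    have h5 : Integrable (fun x => qstar θ0 * (qx x * Real.log (qx x))) νX := by
      have heq : (fun x => qstar θ0 * (qx x * Real.log (qx x)))
          = fun x => ((qstar θ0 * (ip η0 (tθ θ0) - Real.log (Zθ η0))
                - qstar θ0 * Real.log (qstar θ0)) * qx x
              + qstar θ0 * ip (tθ θ0) (qx x • ((T x, (1:ℝ)) : (Fin n → ℝ) × ℝ)))
            - qstar θ0 * qx x * Real.log (Real.exp (ip η0 (tθ θ0) - Real.log (Zθ η0)) *
                Real.exp (ip (tθ θ0) (T x, 1)) / (qstar θ0 * qx x)) := by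
        funext x
        rw [pointwise_eq η0 (tθ θ0) (Zθ η0) (qstar θ0) (qx x) (T x) (hqstar0 θ0) (hqx0 x)]
        ring
      rw [heq]
      exact ((hqxInt.const_mul _).add (hcomp0.const_mul _)).sub hθ0'
    have h6 := h5.const_mul (qstar θ0)⁻¹
    simpa [inv_mul_cancel_left₀ hq0pos.ne'] using h6
  obtain ⟨hIq, hLq⟩ := decomp νX νΘ T tθ (Zθ η0) η0 s qx hqx0 hqxInt hqx1 hsInt hs hEnt
    qθ hq0 hqθInt hq1 hint
  obtain ⟨hIs, hLs⟩ := decomp νX νΘ T tθ (Zθ η0) η0 s qx hqx0 hqxInt hqx1 hsInt hs hEnt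
    qstar hqstar0 hqstarInt hqstar1 hstarInt
  rw [hLq, hLs]
  have hstar_val : ∫ θ, qstar θ * (ip (η0 + s) (tθ θ) - Real.log (qstar θ)) ∂νΘ
      = Real.log (Zθ (η0 + s)) := by
    have hpt : ∀ θ, qstar θ * (ip (η0 + s) (tθ θ) - Real.log (qstar θ))
        = qstar θ * Real.log (Zθ (η0 + s)) := by
      intro θ; rw [hqstar, Real.log_exp]; ring
    rw [integral_congr_ae (Filter.Eventually.of_forall hpt), integral_mul_const, hqstar1, one_mul]
  have key : ∫ θ, qθ θ * (ip (η0 + s) (tθ θ) - Real.log (qθ θ)) ∂νΘ ≤ Real.log (Zθ (η0 + s)) := by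
    have hj : Integrable (fun θ => qθ θ * Real.log (Zθ (η0 + s))) νΘ := hqθInt.mul_const _
    have hL : Integrable (fun θ => qθ θ * (ip (η0 + s) (tθ θ) - Real.log (qθ θ))
        - qθ θ * Real.log (Zθ (η0 + s))) νΘ := hIq.sub hj
    have hR : Integrable (fun θ => Real.exp (ip (η0 + s) (tθ θ)) / Zθ (η0 + s) - qθ θ) νΘ :=
      (hZstar_int.div_const _).sub hqθInt
    have hmono := integral_mono hL hR (fun θ =>
      gibbs_pt (qθ θ) (ip (η0 + s) (tθ θ)) (Zθ (η0 + s)) (hq0 θ) hZstar_pos)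
    rw [integral_sub hIq hj, integral_sub (hZstar_int.div_const _) hqθInt,
      integral_mul_const, hq1, integral_div, ← hZθ, div_self hZstar_pos.ne'] at hmono
    linarith
  linarith [hstar_val, key]
end

section
/- Let p(x, y|θ) = exp⟨t_θ(θ), (t_{xy}(x,y), 1)⟩ be an exponential family likelihood with conjugate prior p(θ) = exp(⟨η⁰_θ, t_θ(θ)⟩ − log Z_θ(η⁰_θ)), fix data y and a probability density q(x) with s = E_{q(x)}[(t_{xy}(x, y), 1)] ∈ ℝ^{n+1} finite, and parameterize q(θ) = exp(⟨η_θ, t_θ(θ)⟩ − log Z_θ(η_θ)). Suppose log Z_θ is twice differentiable at η_θ with ∇ log Z_θ(η_θ) = E_{q(θ)}[t_θ(θ)]. Then the map η_θ ↦ E_{q(θ)q(x)}[log(p(θ)p(x,y|θ)/(q(θ)q(x)))] equals η_θ ↦ ⟨η⁰_θ + s − η_θ, ∇ log Z_θ(η_θ)⟩ − log Z_θ(η⁰_θ) + log Z_θ(η_θ) + C (with C the entropy of q(x), independent of η_θ), and its gradient at η_θ is ∇² log Z_θ(η_θ) · (η⁰_θ + s − η_θ). -/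
open MeasureTheory
open scoped RealInnerProductSpace

/-- **The SVI objective and its gradient in the conjugate global parameter.**
Let `p(x, y|θ) = exp⟪t_θ(θ), (t_{xy}(x,y), 1)⟫` be an exponential family likelihood
with conjugate prior `p(θ) = exp(⟪η⁰_θ, t_θ(θ)⟫ − log Z_θ(η⁰_θ))`; fix data `y`
(so `u x = (t_{xy}(x, y), 1) ∈ ℝ^{n+1}`, with last coordinate `1`), fix a probability
density `q(x)` with `s = E_{q(x)}[u]` finite, and parameterize
`q(θ) = exp(⟪η_θ, t_θ(θ)⟫ − log Z_θ(η_θ))`.  Suppose `log Z_θ` is differentiable near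
`η_θ` and twice differentiable at `η_θ`, with `∇ log Z_θ = E_{q(θ)}[t_θ(θ)]` (the
expected statistic) near `η_θ`, and that the objective is well defined (normalized
factors and integrable integrands) near `η_θ`.  Then the mean field objective
`L(η) = E_{q(θ)q(x)}[log (p(θ)p(x,y|θ)/(q(θ)q(x)))]` satisfies, near `η_θ`,
`L(η) = ⟪η⁰_θ + s − η, ∇log Z_θ(η)⟫ − log Z_θ(η⁰_θ) + log Z_θ(η) + C` with
`C = −∫ q(x) log q(x)` the entropy of `q(x)` (independent of `η`), and its gradient
at `η_θ` is `∇² log Z_θ(η_θ) · (η⁰_θ + s − η_θ)`. -/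
theorem stmt11 {X Θ : Type*} [MeasurableSpace X] [MeasurableSpace Θ]
    (νX : Measure X) (νΘ : Measure Θ) [SigmaFinite νX] [SigmaFinite νΘ]
    {n : ℕ}
    (u : X → EuclideanSpace ℝ (Fin (n + 1)))
    (hu : ∀ x, u x (Fin.last n) = 1)
    (tθ : Θ → EuclideanSpace ℝ (Fin (n + 1)))
    (Zθ : EuclideanSpace ℝ (Fin (n + 1)) → ℝ)
    (hZθ : ∀ η, Zθ η = ∫ θ, Real.exp ⟪η, tθ θ⟫ ∂νΘ)
    (η0 : EuclideanSpace ℝ (Fin (n + 1)))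
    (qx : X → ℝ) (hqx0 : ∀ x, 0 ≤ qx x) (hqx1 : ∫ x, qx x ∂νX = 1)
    (hqxInt : Integrable qx νX)
    (hsInt : Integrable (fun x => qx x • u x) νX)
    (s : EuclideanSpace ℝ (Fin (n + 1))) (hs : s = ∫ x, qx x • u x ∂νX)
    (hent : Integrable (fun x => qx x * Real.log (qx x)) νX)
    (L : EuclideanSpace ℝ (Fin (n + 1)) → ℝ)
    (hL : ∀ η, L η = ∫ pr : Θ × X,
        Real.exp (⟪η, tθ pr.1⟫ - Real.log (Zθ η)) * qx pr.2 *
          Real.log (Real.exp (⟪η0, tθ pr.1⟫ - Real.log (Zθ η0)) *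
              Real.exp ⟪tθ pr.1, u pr.2⟫ /
            (Real.exp (⟪η, tθ pr.1⟫ - Real.log (Zθ η)) * qx pr.2)) ∂(νΘ.prod νX))
    (ηθ : EuclideanSpace ℝ (Fin (n + 1)))
    (G : EuclideanSpace ℝ (Fin (n + 1)) → EuclideanSpace ℝ (Fin (n + 1)))
    (hG : ∀ᶠ η in nhds ηθ, HasGradientAt (fun η' => Real.log (Zθ η')) (G η) η)
    (hGmeanInt : ∀ᶠ η in nhds ηθ,
        Integrable (fun θ => Real.exp (⟪η, tθ θ⟫ - Real.log (Zθ η)) • tθ θ) νΘ)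
    (hGmean : ∀ᶠ η in nhds ηθ,
        G η = ∫ θ, Real.exp (⟪η, tθ θ⟫ - Real.log (Zθ η)) • tθ θ ∂νΘ)
    (hqθInt : ∀ᶠ η in nhds ηθ,
        Integrable (fun θ => Real.exp (⟪η, tθ θ⟫ - Real.log (Zθ η))) νΘ)
    (hnorm : ∀ᶠ η in nhds ηθ,
        ∫ θ, Real.exp (⟪η, tθ θ⟫ - Real.log (Zθ η)) ∂νΘ = 1)
    (hfub : ∀ᶠ η in nhds ηθ, Integrable (fun pr : Θ × X =>
        Real.exp (⟪η, tθ pr.1⟫ - Real.log (Zθ η)) * qx pr.2 *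
          Real.log (Real.exp (⟪η0, tθ pr.1⟫ - Real.log (Zθ η0)) *
              Real.exp ⟪tθ pr.1, u pr.2⟫ /
            (Real.exp (⟪η, tθ pr.1⟫ - Real.log (Zθ η)) * qx pr.2))) (νΘ.prod νX))
    (Hess : EuclideanSpace ℝ (Fin (n + 1)) →L[ℝ] EuclideanSpace ℝ (Fin (n + 1)))
    (hHess : HasFDerivAt G Hess ηθ) :
    (∀ᶠ η in nhds ηθ,
        L η = ⟪η0 + s - η, G η⟫ - Real.log (Zθ η0) + Real.log (Zθ η)
          + (- ∫ x, qx x * Real.log (qx x) ∂νX))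
    ∧ HasGradientAt L (Hess (η0 + s - ηθ)) ηθ := by
  classical
  have key : ∀ᶠ η in nhds ηθ,
      L η = ⟪η0 + s - η, G η⟫ - Real.log (Zθ η0) + Real.log (Zθ η)
        + (- ∫ x, qx x * Real.log (qx x) ∂νX) := by
    filter_upwards [hGmeanInt, hGmean, hqθInt, hnorm] with η hInt hMean hqInt hn
    set qθ : Θ → ℝ := fun θ => Real.exp (⟪η, tθ θ⟫ - Real.log (Zθ η)) with hqθ
    have hpt : ∀ (θ : Θ) (x : X),
        qθ θ * qx x *
          Real.log (Real.exp (⟪η0, tθ θ⟫ - Real.log (Zθ η0)) * Real.exp ⟪tθ θ, u x⟫ /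
            (qθ θ * qx x))
      = ⟪η0 - η, qθ θ • tθ θ⟫ * qx x
        + ⟪qθ θ • tθ θ, qx x • u x⟫
        + qθ θ * (qx x * (Real.log (Zθ η) - Real.log (Zθ η0)))
        - qθ θ * (qx x * Real.log (qx x)) := by
      intro θ x
      rcases eq_or_lt_of_le (hqx0 x) with h0 | hpos
      · simp [← h0]
      · rw [hqθ]
        rw [Real.log_div (by positivity) (by positivity),
          Real.log_mul (Real.exp_ne_zero _) (Real.exp_ne_zero _),
          Real.log_mul (Real.exp_ne_zero _) (ne_of_gt hpos),
          Real.log_exp, Real.log_exp]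
        simp only [Real.log_exp, real_inner_smul_left, real_inner_smul_right, inner_sub_left]
        ring
    -- integrability of the four pieces
    have hF : Integrable (fun θ => qθ θ • tθ θ) νΘ := hInt
    have hH : Integrable (fun x => qx x • u x) νX := hsInt
    have hA : Integrable (fun pr : Θ × X => ⟪η0 - η, qθ pr.1 • tθ pr.1⟫ * qx pr.2)
        (νΘ.prod νX) := (hF.const_inner (η0 - η)).mul_prod hqxInt
    have hB : Integrable (fun pr : Θ × X => ⟪qθ pr.1 • tθ pr.1, qx pr.2 • u pr.2⟫)
        (νΘ.prod νX) := by
      refine (hF.norm.mul_prod hH.norm).mono'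
        ((hF.aestronglyMeasurable.comp_fst).inner (hH.aestronglyMeasurable.comp_snd)) ?_
      filter_upwards with pr
      exact (norm_inner_le_norm _ _).trans (le_of_eq (by simp [abs_mul]))
    have hC : Integrable (fun pr : Θ × X =>
        qθ pr.1 * (qx pr.2 * (Real.log (Zθ η) - Real.log (Zθ η0)))) (νΘ.prod νX) :=
      hqInt.mul_prod (hqxInt.mul_const _)
    have hD : Integrable (fun pr : Θ × X => qθ pr.1 * (qx pr.2 * Real.log (qx pr.2)))
        (νΘ.prod νX) := hqInt.mul_prod hent
    have hLη : L η = (∫ pr : Θ × X, ⟪η0 - η, qθ pr.1 • tθ pr.1⟫ * qx pr.2 ∂(νΘ.prod νX))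
        + (∫ pr : Θ × X, ⟪qθ pr.1 • tθ pr.1, qx pr.2 • u pr.2⟫ ∂(νΘ.prod νX))
        + (∫ pr : Θ × X, qθ pr.1 * (qx pr.2 * (Real.log (Zθ η) - Real.log (Zθ η0)))
            ∂(νΘ.prod νX))
        - (∫ pr : Θ × X, qθ pr.1 * (qx pr.2 * Real.log (qx pr.2)) ∂(νΘ.prod νX)) := by
      have hAB : Integrable (fun pr : Θ × X =>
          ⟪η0 - η, qθ pr.1 • tθ pr.1⟫ * qx pr.2
            + ⟪qθ pr.1 • tθ pr.1, qx pr.2 • u pr.2⟫) (νΘ.prod νX) := hA.add hB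
      have hABC : Integrable (fun pr : Θ × X =>
          ⟪η0 - η, qθ pr.1 • tθ pr.1⟫ * qx pr.2
            + ⟪qθ pr.1 • tθ pr.1, qx pr.2 • u pr.2⟫
            + qθ pr.1 * (qx pr.2 * (Real.log (Zθ η) - Real.log (Zθ η0)))) (νΘ.prod νX) :=
        hAB.add hC
      rw [hL η,
        integral_congr_ae (Filter.Eventually.of_forall fun pr : Θ × X => hpt pr.1 pr.2),
        integral_sub hABC hD, integral_add hAB hC, integral_add hA hB]
    have eA : (∫ pr : Θ × X, ⟪η0 - η, qθ pr.1 • tθ pr.1⟫ * qx pr.2 ∂(νΘ.prod νX))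
        = ⟪η0 - η, G η⟫ := by
      rw [integral_prod_mul (fun θ => ⟪η0 - η, qθ θ • tθ θ⟫) qx, hqx1, mul_one,
        integral_inner hF, ← hMean]
    have eB : (∫ pr : Θ × X, ⟪qθ pr.1 • tθ pr.1, qx pr.2 • u pr.2⟫ ∂(νΘ.prod νX))
        = ⟪s, G η⟫ := by
      rw [integral_prod (fun pr : Θ × X => ⟪qθ pr.1 • tθ pr.1, qx pr.2 • u pr.2⟫) hB]
      have : ∀ θ : Θ, (∫ x, ⟪qθ θ • tθ θ, qx x • u x⟫ ∂νX) = ⟪s, qθ θ • tθ θ⟫ := by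
        intro θ
        rw [integral_inner hH, hs, real_inner_comm]
      rw [integral_congr_ae (Filter.Eventually.of_forall this), integral_inner hF, ← hMean]
    have eC : (∫ pr : Θ × X, qθ pr.1 * (qx pr.2 * (Real.log (Zθ η) - Real.log (Zθ η0)))
        ∂(νΘ.prod νX)) = Real.log (Zθ η) - Real.log (Zθ η0) := by
      rw [integral_prod_mul qθ (fun x => qx x * (Real.log (Zθ η) - Real.log (Zθ η0))), hn,
        one_mul, integral_mul_const, hqx1, one_mul]
    have eD : (∫ pr : Θ × X, qθ pr.1 * (qx pr.2 * Real.log (qx pr.2)) ∂(νΘ.prod νX))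
        = ∫ x, qx x * Real.log (qx x) ∂νX := by
      rw [integral_prod_mul qθ (fun x => qx x * Real.log (qx x)), hn, one_mul]
    rw [hLη, eA, eB, eC, eD]
    have : ⟪η0 + s - η, G η⟫ = ⟪η0 - η, G η⟫ + ⟪s, G η⟫ := by
      rw [← inner_add_left]
      congr 1
      abel
    rw [this]; ring
  refine ⟨key, ?_⟩
  have hG0 : HasGradientAt (fun η' => Real.log (Zθ η')) (G ηθ) ηθ := hG.self_of_nhds
  set T : EuclideanSpace ℝ (Fin (n + 1)) →L[ℝ] (EuclideanSpace ℝ (Fin (n + 1)) →L[ℝ] ℝ) :=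
    (InnerProductSpace.toDual ℝ
      (EuclideanSpace ℝ (Fin (n + 1)))).toContinuousLinearEquiv.toContinuousLinearMap with hT
  have hsymm : ∀ v w : EuclideanSpace ℝ (Fin (n + 1)), ⟪Hess v, w⟫ = ⟪Hess w, v⟫ := by
    have hf' : ∀ᶠ y in nhds ηθ,
        HasFDerivAt (fun η' => Real.log (Zθ η')) (T (G y)) y := by
      filter_upwards [hG] with y hy
      exact hy.hasFDerivAt
    have hf'' : HasFDerivAt (fun y => T (G y)) (T.comp Hess) ηθ :=
      T.hasFDerivAt.comp ηθ hHess
    intro v w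
    have := second_derivative_symmetric_of_eventually hf' hf'' v w
    simpa [hT, InnerProductSpace.toDual_apply_apply] using this
  rw [hasGradientAt_iff_hasFDerivAt,
    Filter.EventuallyEq.hasFDerivAt_iff key]
  have h1 : HasFDerivAt (fun η => η0 + s - η)
      (-(ContinuousLinearMap.id ℝ (EuclideanSpace ℝ (Fin (n + 1))))) ηθ :=
    (hasFDerivAt_id ηθ).const_sub (η0 + s)
  have hinner := HasFDerivAt.inner ℝ h1 hHess
  have hall := ((hinner.sub_const (Real.log (Zθ η0))).add hG0.hasFDerivAt).add_const
    (- ∫ x, qx x * Real.log (qx x) ∂νX)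
  refine hall.congr_fderiv ?_
  ext h
  simp only [ContinuousLinearMap.add_apply, ContinuousLinearMap.comp_apply,
    ContinuousLinearMap.prod_apply, ContinuousLinearMap.neg_apply,
    ContinuousLinearMap.coe_id', id_eq, fderivInnerCLM_apply,
    InnerProductSpace.toDual_apply_apply, inner_neg_left]
  have e1 : ⟪η0 + s - ηθ, Hess h⟫ = ⟪Hess (η0 + s - ηθ), h⟫ := by
    rw [real_inner_comm]; exact hsymm h (η0 + s - ηθ)
  have e2 : ⟪h, G ηθ⟫ = ⟪G ηθ, h⟫ := real_inner_comm _ _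
  linarith [e1, e2]
end

section
/- Under the hypotheses of the SVI gradient computation — p(x,y|θ) = exp⟨t_θ(θ), (t_{xy}(x,y),1)⟩ an exponential family likelihood with conjugate prior p(θ) having statistic t_θ and log partition function log Z_θ, fixed data y, fixed density q(x) with s = E_{q(x)}[(t_{xy}(x,y), 1)] finite, q(θ) in the prior's family with natural parameter η_θ, log Z_θ twice differentiable at η_θ with ∇ log Z_θ(η_θ) = E_{q(θ)}[t_θ(θ)], and additionally ∇² log Z_θ(η_θ) invertible — the natural gradient of the SVI objective L(η_θ) = E_{q(θ)q(x)}[log(p(θ)p(x,y|θ)/(q(θ)q(x)))], defined as (∇² log Z_θ(η_θ))⁻¹ ∇L(η_θ), equals η⁰_θ + E_{q(x)}[(t_{xy}(x, y), 1)] − η_θ. -/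
open MeasureTheory
open scoped RealInnerProductSpace

lemma svi_aux_log (a b d q : ℝ) (hq : 0 ≤ q) :
    Real.exp a * q * Real.log (Real.exp b * Real.exp d / (Real.exp a * q))
      = Real.exp a * (q * (b + d - a)) - Real.exp a * (q * Real.log q) := by
  rcases eq_or_lt_of_le hq with h | h
  · simp [← h]
  · rw [Real.log_div (by positivity) (by positivity), Real.log_mul (Real.exp_ne_zero _)
      (Real.exp_ne_zero _), Real.log_mul (Real.exp_ne_zero _) h.ne', Real.log_exp,
      Real.log_exp, Real.log_exp]
    ring

lemma svi_L_repr {X Θ : Type*} [MeasurableSpace X] [MeasurableSpace Θ]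
    (νX : Measure X) (νΘ : Measure Θ) [SigmaFinite νX] [SigmaFinite νΘ]
    {n : ℕ}
    (u : X → EuclideanSpace ℝ (Fin (n + 1)))
    (tθ : Θ → EuclideanSpace ℝ (Fin (n + 1)))
    (Zθ : EuclideanSpace ℝ (Fin (n + 1)) → ℝ)
    (η0 : EuclideanSpace ℝ (Fin (n + 1)))
    (qx : X → ℝ) (hqx0 : ∀ x, 0 ≤ qx x) (hqx1 : ∫ x, qx x ∂νX = 1)
    (hqxInt : Integrable qx νX)
    (hsInt : Integrable (fun x => qx x • u x) νX)
    (s : EuclideanSpace ℝ (Fin (n + 1))) (hs : s = ∫ x, qx x • u x ∂νX)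
    (hent : Integrable (fun x => qx x * Real.log (qx x)) νX)
    (L : EuclideanSpace ℝ (Fin (n + 1)) → ℝ)
    (hL : ∀ η, L η = ∫ pr : Θ × X,
        Real.exp (⟪η, tθ pr.1⟫ - Real.log (Zθ η)) * qx pr.2 *
          Real.log (Real.exp (⟪η0, tθ pr.1⟫ - Real.log (Zθ η0)) *
              Real.exp ⟪tθ pr.1, u pr.2⟫ /
            (Real.exp (⟪η, tθ pr.1⟫ - Real.log (Zθ η)) * qx pr.2)) ∂(νΘ.prod νX))
    (η : EuclideanSpace ℝ (Fin (n + 1)))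
    (G : EuclideanSpace ℝ (Fin (n + 1)) → EuclideanSpace ℝ (Fin (n + 1)))
    (hInt : Integrable (fun θ => Real.exp (⟪η, tθ θ⟫ - Real.log (Zθ η)) • tθ θ) νΘ)
    (hGm : G η = ∫ θ, Real.exp (⟪η, tθ θ⟫ - Real.log (Zθ η)) • tθ θ ∂νΘ)
    (hqi : Integrable (fun θ => Real.exp (⟪η, tθ θ⟫ - Real.log (Zθ η))) νΘ)
    (hn : ∫ θ, Real.exp (⟪η, tθ θ⟫ - Real.log (Zθ η)) ∂νΘ = 1) :
    L η = ⟪η0 + s - η, G η⟫ + Real.log (Zθ η)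
      - (Real.log (Zθ η0) + ∫ x, qx x * Real.log (qx x) ∂νX) := by
  classical
  set C : ℝ := Real.log (Zθ η) - Real.log (Zθ η0) with hC
  set q : Θ → ℝ := fun θ => Real.exp (⟪η, tθ θ⟫ - Real.log (Zθ η)) with hq
  -- pointwise identity
  have hpt : ∀ pr : Θ × X,
      Real.exp (⟪η, tθ pr.1⟫ - Real.log (Zθ η)) * qx pr.2 *
          Real.log (Real.exp (⟪η0, tθ pr.1⟫ - Real.log (Zθ η0)) *
              Real.exp ⟪tθ pr.1, u pr.2⟫ /
            (Real.exp (⟪η, tθ pr.1⟫ - Real.log (Zθ η)) * qx pr.2))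
      = (q pr.1 * ⟪η0 - η, tθ pr.1⟫) * qx pr.2
        + (∑ i, (q pr.1 • tθ pr.1) i * (qx pr.2 • u pr.2) i)
        + q pr.1 * (qx pr.2 * C)
        - q pr.1 * (qx pr.2 * Real.log (qx pr.2)) := by
    rintro ⟨θ, x⟩
    have := svi_aux_log (⟪η, tθ θ⟫ - Real.log (Zθ η)) (⟪η0, tθ θ⟫ - Real.log (Zθ η0))
      (⟪tθ θ, u x⟫) (qx x) (hqx0 x)
    rw [this]
    have hip : ⟪tθ θ, u x⟫ = ∑ i, tθ θ i * u x i := by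
      simp [PiLp.inner_apply, RCLike.inner_apply, conj_trivial]
      exact Finset.sum_congr rfl fun _ _ => mul_comm _ _
    have hsub : ⟪η0 - η, tθ θ⟫ = ⟪η0, tθ θ⟫ - ⟪η, tθ θ⟫ := inner_sub_left _ _ _
    simp only [hq, PiLp.smul_apply, smul_eq_mul]
    have hsum : ∑ i, Real.exp (⟪η, tθ θ⟫ - Real.log (Zθ η)) * tθ θ i * (qx x * u x i)
        = Real.exp (⟪η, tθ θ⟫ - Real.log (Zθ η)) * (qx x * ∑ i, tθ θ i * u x i) := by
      rw [Finset.mul_sum, Finset.mul_sum]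
      exact Finset.sum_congr rfl fun i _ => by ring
    rw [hip, hC, hsum, hsub]
    ring
  -- integrability of the pieces
  have iA : Integrable (fun θ => q θ * ⟪η0 - η, tθ θ⟫) νΘ := by
    have h := Integrable.const_inner (𝕜 := ℝ) (η0 - η) hInt
    simp only [real_inner_smul_right] at h
    exact h
  have iB : ∀ i, Integrable (fun θ => (q θ • tθ θ) i) νΘ := by
    intro i
    have h := Integrable.const_inner (𝕜 := ℝ) (EuclideanSpace.single i (1:ℝ)) hInt
    simp only [EuclideanSpace.inner_single_left, map_one, one_mul] at h
    exact h
  have iC : ∀ i, Integrable (fun x => (qx x • u x) i) νX := by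
    intro i
    have h := Integrable.const_inner (𝕜 := ℝ) (EuclideanSpace.single i (1:ℝ)) hsInt
    simp only [EuclideanSpace.inner_single_left, map_one, one_mul] at h
    exact h
  have i1 : Integrable (fun pr : Θ × X => (q pr.1 * ⟪η0 - η, tθ pr.1⟫) * qx pr.2)
      (νΘ.prod νX) := iA.mul_prod hqxInt
  have i2 : Integrable (fun pr : Θ × X => ∑ i, (q pr.1 • tθ pr.1) i * (qx pr.2 • u pr.2) i)
      (νΘ.prod νX) :=
    integrable_finset_sum _ fun i _ => (iB i).mul_prod (iC i)
  have i3 : Integrable (fun pr : Θ × X => q pr.1 * (qx pr.2 * C)) (νΘ.prod νX) :=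
    hqi.mul_prod (hqxInt.mul_const C)
  have i4 : Integrable (fun pr : Θ × X => q pr.1 * (qx pr.2 * Real.log (qx pr.2)))
      (νΘ.prod νX) := hqi.mul_prod hent
  -- rewrite and split
  rw [hL η]
  calc ∫ pr : Θ × X,
        Real.exp (⟪η, tθ pr.1⟫ - Real.log (Zθ η)) * qx pr.2 *
          Real.log (Real.exp (⟪η0, tθ pr.1⟫ - Real.log (Zθ η0)) *
              Real.exp ⟪tθ pr.1, u pr.2⟫ /
            (Real.exp (⟪η, tθ pr.1⟫ - Real.log (Zθ η)) * qx pr.2)) ∂(νΘ.prod νX)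
      = ∫ pr : Θ × X, ((q pr.1 * ⟪η0 - η, tθ pr.1⟫) * qx pr.2
        + (∑ i, (q pr.1 • tθ pr.1) i * (qx pr.2 • u pr.2) i)
        + q pr.1 * (qx pr.2 * C)
        - q pr.1 * (qx pr.2 * Real.log (qx pr.2))) ∂(νΘ.prod νX) := by
        exact integral_congr_ae (Filter.Eventually.of_forall hpt)
    _ = (∫ pr : Θ × X, (q pr.1 * ⟪η0 - η, tθ pr.1⟫) * qx pr.2 ∂(νΘ.prod νX))
        + (∫ pr : Θ × X, ∑ i, (q pr.1 • tθ pr.1) i * (qx pr.2 • u pr.2) i ∂(νΘ.prod νX))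
        + (∫ pr : Θ × X, q pr.1 * (qx pr.2 * C) ∂(νΘ.prod νX))
        - (∫ pr : Θ × X, q pr.1 * (qx pr.2 * Real.log (qx pr.2)) ∂(νΘ.prod νX)) := by
        have i12 : Integrable (fun pr : Θ × X => (q pr.1 * ⟪η0 - η, tθ pr.1⟫) * qx pr.2
            + ∑ i, (q pr.1 • tθ pr.1) i * (qx pr.2 • u pr.2) i) (νΘ.prod νX) := i1.add i2
        have i123 : Integrable (fun pr : Θ × X => (q pr.1 * ⟪η0 - η, tθ pr.1⟫) * qx pr.2
            + (∑ i, (q pr.1 • tθ pr.1) i * (qx pr.2 • u pr.2) i)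
            + q pr.1 * (qx pr.2 * C)) (νΘ.prod νX) := i12.add i3
        rw [integral_sub i123 i4, integral_add i12 i3, integral_add i1 i2]
    _ = ⟪η0 + s - η, G η⟫ + Real.log (Zθ η)
      - (Real.log (Zθ η0) + ∫ x, qx x * Real.log (qx x) ∂νX) := by
        have e1 : (∫ pr : Θ × X, (q pr.1 * ⟪η0 - η, tθ pr.1⟫) * qx pr.2 ∂(νΘ.prod νX))
            = ⟪η0 - η, G η⟫ := by
          rw [integral_prod_mul (fun θ => q θ * ⟪η0 - η, tθ θ⟫) qx, hqx1, mul_one]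
          have : (fun θ => q θ * ⟪η0 - η, tθ θ⟫) = fun θ => ⟪η0 - η, q θ • tθ θ⟫ := by
            funext θ; rw [real_inner_smul_right]
          rw [this, integral_inner (𝕜 := ℝ) hInt, ← hGm]
        have e2 : (∫ pr : Θ × X, ∑ i, (q pr.1 • tθ pr.1) i * (qx pr.2 • u pr.2) i
              ∂(νΘ.prod νX)) = ⟪s, G η⟫ := by
          rw [integral_finset_sum]
          · have : ∀ i, (∫ pr : Θ × X, (q pr.1 • tθ pr.1) i * (qx pr.2 • u pr.2) i
                ∂(νΘ.prod νX)) = (G η) i * s i := by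
              intro i
              rw [integral_prod_mul (fun θ => (q θ • tθ θ) i) (fun x => (qx x • u x) i)]
              congr 1
              · have h := integral_inner (𝕜 := ℝ) hInt (EuclideanSpace.single i (1:ℝ))
                simp only [EuclideanSpace.inner_single_left, map_one, one_mul] at h
                rw [hGm]; exact h
              · have h := integral_inner (𝕜 := ℝ) hsInt (EuclideanSpace.single i (1:ℝ))
                simp only [EuclideanSpace.inner_single_left, map_one, one_mul] at h
                rw [hs]; exact h
            rw [Finset.sum_congr rfl fun i _ => this i]
            rw [real_inner_comm]
            simp [PiLp.inner_apply, RCLike.inner_apply, conj_trivial]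
            exact Finset.sum_congr rfl fun _ _ => mul_comm _ _
          · exact fun i _ => (iB i).mul_prod (iC i)
        have e3 : (∫ pr : Θ × X, q pr.1 * (qx pr.2 * C) ∂(νΘ.prod νX)) = C := by
          rw [integral_prod_mul q (fun x => qx x * C), hn, one_mul,
            integral_mul_const, hqx1, one_mul]
        have e4 : (∫ pr : Θ × X, q pr.1 * (qx pr.2 * Real.log (qx pr.2)) ∂(νΘ.prod νX))
            = ∫ x, qx x * Real.log (qx x) ∂νX := by
          rw [integral_prod_mul q (fun x => qx x * Real.log (qx x)), hn, one_mul]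
        rw [e1, e2, e3, e4, hC]
        have : ⟪η0 + s - η, G η⟫ = ⟪η0 - η, G η⟫ + ⟪s, G η⟫ := by
          rw [← inner_add_left]; congr 1; abel
        rw [this]; ring



open MeasureTheory
open scoped RealInnerProductSpace

/-- **Natural gradient of the SVI objective.**
Under the hypotheses of the SVI gradient computation — `p(x,y|θ)` an exponential family
likelihood with conjugate prior with statistic `t_θ` and log partition function
`log Z_θ`, fixed data `y` (`u x = (t_{xy}(x,y), 1)`), fixed density `q(x)` with
`s = E_{q(x)}[u]` finite, `q(θ)` in the prior's family with natural parameter `η_θ`,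
`log Z_θ` twice differentiable at `η_θ` with `∇ log Z_θ = E_{q(θ)}[t_θ(θ)]`, and
additionally `∇² log Z_θ(η_θ)` invertible (with inverse `Hinv`) — the natural gradient
of the SVI objective `L`, namely `(∇² log Z_θ(η_θ))⁻¹ ∇L(η_θ)`, equals
`η⁰_θ + E_{q(x)}[(t_{xy}(x, y), 1)] − η_θ`. -/
theorem stmt12 {X Θ : Type*} [MeasurableSpace X] [MeasurableSpace Θ]
    (νX : Measure X) (νΘ : Measure Θ) [SigmaFinite νX] [SigmaFinite νΘ]
    {n : ℕ}
    (u : X → EuclideanSpace ℝ (Fin (n + 1)))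
    (hu : ∀ x, u x (Fin.last n) = 1)
    (tθ : Θ → EuclideanSpace ℝ (Fin (n + 1)))
    (Zθ : EuclideanSpace ℝ (Fin (n + 1)) → ℝ)
    (hZθ : ∀ η, Zθ η = ∫ θ, Real.exp ⟪η, tθ θ⟫ ∂νΘ)
    (η0 : EuclideanSpace ℝ (Fin (n + 1)))
    (qx : X → ℝ) (hqx0 : ∀ x, 0 ≤ qx x) (hqx1 : ∫ x, qx x ∂νX = 1)
    (hqxInt : Integrable qx νX)
    (hsInt : Integrable (fun x => qx x • u x) νX)
    (s : EuclideanSpace ℝ (Fin (n + 1))) (hs : s = ∫ x, qx x • u x ∂νX)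
    (hent : Integrable (fun x => qx x * Real.log (qx x)) νX)
    (L : EuclideanSpace ℝ (Fin (n + 1)) → ℝ)
    (hL : ∀ η, L η = ∫ pr : Θ × X,
        Real.exp (⟪η, tθ pr.1⟫ - Real.log (Zθ η)) * qx pr.2 *
          Real.log (Real.exp (⟪η0, tθ pr.1⟫ - Real.log (Zθ η0)) *
              Real.exp ⟪tθ pr.1, u pr.2⟫ /
            (Real.exp (⟪η, tθ pr.1⟫ - Real.log (Zθ η)) * qx pr.2)) ∂(νΘ.prod νX))
    (ηθ : EuclideanSpace ℝ (Fin (n + 1)))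
    (G : EuclideanSpace ℝ (Fin (n + 1)) → EuclideanSpace ℝ (Fin (n + 1)))
    (hG : ∀ᶠ η in nhds ηθ, HasGradientAt (fun η' => Real.log (Zθ η')) (G η) η)
    (hGmeanInt : ∀ᶠ η in nhds ηθ,
        Integrable (fun θ => Real.exp (⟪η, tθ θ⟫ - Real.log (Zθ η)) • tθ θ) νΘ)
    (hGmean : ∀ᶠ η in nhds ηθ,
        G η = ∫ θ, Real.exp (⟪η, tθ θ⟫ - Real.log (Zθ η)) • tθ θ ∂νΘ)
    (hqθInt : ∀ᶠ η in nhds ηθ,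
        Integrable (fun θ => Real.exp (⟪η, tθ θ⟫ - Real.log (Zθ η))) νΘ)
    (hnorm : ∀ᶠ η in nhds ηθ,
        ∫ θ, Real.exp (⟪η, tθ θ⟫ - Real.log (Zθ η)) ∂νΘ = 1)
    (hfub : ∀ᶠ η in nhds ηθ, Integrable (fun pr : Θ × X =>
        Real.exp (⟪η, tθ pr.1⟫ - Real.log (Zθ η)) * qx pr.2 *
          Real.log (Real.exp (⟪η0, tθ pr.1⟫ - Real.log (Zθ η0)) *
              Real.exp ⟪tθ pr.1, u pr.2⟫ /
            (Real.exp (⟪η, tθ pr.1⟫ - Real.log (Zθ η)) * qx pr.2))) (νΘ.prod νX))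
    (Hess : EuclideanSpace ℝ (Fin (n + 1)) →L[ℝ] EuclideanSpace ℝ (Fin (n + 1)))
    (hHess : HasFDerivAt G Hess ηθ) :
    ∀ Hinv : EuclideanSpace ℝ (Fin (n + 1)) →L[ℝ] EuclideanSpace ℝ (Fin (n + 1)),
      (∀ v, Hinv (Hess v) = v) → (∀ v, Hess (Hinv v) = v) →
      Hinv (gradient L ηθ) = η0 + s - ηθ := by

  intro Hinv hinv1 _hinv2
  classical
  -- symmetry of the Hessian
  set T : EuclideanSpace ℝ (Fin (n + 1)) →L[ℝ] EuclideanSpace ℝ (Fin (n + 1)) →L[ℝ] ℝ :=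
    (isBoundedBilinearMap_inner (𝕜 := ℝ) (E := EuclideanSpace ℝ (Fin (n + 1)))).toContinuousLinearMap with hT
  have hTv : ∀ x : EuclideanSpace ℝ (Fin (n + 1)), T x = InnerProductSpace.toDual ℝ _ x := by
    intro x; ext y
    rw [InnerProductSpace.toDual_apply_apply]; rfl
  have hsymm : ∀ v w : EuclideanSpace ℝ (Fin (n + 1)), ⟪Hess v, w⟫ = ⟪Hess w, v⟫ := by
    intro v w
    have hf : ∀ᶠ y in nhds ηθ,
        HasFDerivAt (fun η' => Real.log (Zθ η')) (T (G y)) y := by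
      filter_upwards [hG] with y hy
      rw [hTv]; exact hy.hasFDerivAt
    have hf' : HasFDerivAt (fun y => T (G y)) (T.comp Hess) ηθ :=
      T.hasFDerivAt.comp ηθ hHess
    exact second_derivative_symmetric_of_eventually hf hf' v w
  -- eventual representation of L
  have hK : ∀ᶠ η in nhds ηθ, L η = ⟪η0 + s - η, G η⟫ + Real.log (Zθ η)
      - (Real.log (Zθ η0) + ∫ x, qx x * Real.log (qx x) ∂νX) := by
    filter_upwards [hGmeanInt, hGmean, hqθInt, hnorm] with η h1 h2 h3 h4
    exact svi_L_repr νX νΘ u tθ Zθ η0 qx hqx0 hqx1 hqxInt hsInt s hs hent L hL η G h1 h2 h3 h4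
  -- derivative of the representation
  set F : EuclideanSpace ℝ (Fin (n + 1)) → ℝ := fun η => ⟪η0 + s - η, G η⟫ + Real.log (Zθ η)
      - (Real.log (Zθ η0) + ∫ x, qx x * Real.log (qx x) ∂νX) with hF
  have hd1 : HasFDerivAt (fun η => η0 + s - η)
      (-(ContinuousLinearMap.id ℝ (EuclideanSpace ℝ (Fin (n + 1))))) ηθ := by
    simpa using (hasFDerivAt_id ηθ).const_sub (η0 + s)
  have hd2 : HasFDerivAt (fun η : EuclideanSpace ℝ (Fin (n + 1)) => ⟪η0 + s - η, G η⟫)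
      ((fderivInnerCLM ℝ (η0 + s - ηθ, G ηθ)).comp
        ((-(ContinuousLinearMap.id ℝ (EuclideanSpace ℝ (Fin (n + 1))))).prod Hess)) ηθ :=
    hd1.inner ℝ hHess
  have hd3 : HasFDerivAt (fun η' => Real.log (Zθ η'))
      (InnerProductSpace.toDual ℝ _ (G ηθ)) ηθ := (hG.self_of_nhds).hasFDerivAt
  have hdF : HasFDerivAt F
      (((fderivInnerCLM ℝ (η0 + s - ηθ, G ηθ)).comp
        ((-(ContinuousLinearMap.id ℝ (EuclideanSpace ℝ (Fin (n + 1))))).prod Hess))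
        + InnerProductSpace.toDual ℝ _ (G ηθ)) ηθ := (hd2.add hd3).sub_const _
  have hΦ : (((fderivInnerCLM ℝ (η0 + s - ηθ, G ηθ)).comp
        ((-(ContinuousLinearMap.id ℝ (EuclideanSpace ℝ (Fin (n + 1))))).prod Hess))
        + InnerProductSpace.toDual ℝ _ (G ηθ))
      = InnerProductSpace.toDual ℝ _ (Hess (η0 + s - ηθ)) := by
    ext v
    simp only [ContinuousLinearMap.add_apply, ContinuousLinearMap.comp_apply,
      ContinuousLinearMap.prod_apply, ContinuousLinearMap.neg_apply,
      ContinuousLinearMap.id_apply, fderivInnerCLM_apply,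
      InnerProductSpace.toDual_apply_apply]
    rw [inner_neg_left, real_inner_comm (G ηθ) v, real_inner_comm (Hess v) (η0 + s - ηθ),
      hsymm v (η0 + s - ηθ)]
    ring
  have hdF' : HasFDerivAt F (InnerProductSpace.toDual ℝ _ (Hess (η0 + s - ηθ))) ηθ := by
    rw [← hΦ]; exact hdF
  have hdL : HasGradientAt L (Hess (η0 + s - ηθ)) ηθ := by
    rw [hasGradientAt_iff_hasFDerivAt]
    exact hdF'.congr_of_eventuallyEq hK
  rw [hdL.gradient, hinv1]
end

section
/- Let log Z_θ : ℝ^{n+1} → ℝ be twice differentiable, let Π : ℝ^{n+1} → ℝ^n be the projection onto the first n coordinates, let r ∈ ℝ^n, and define η*_x(η_θ) = Π(∇ log Z_θ(η_θ)) + r (the optimal local variational parameter, equal to the expected prior natural parameter E_{q(θ)}[η⁰_x(θ)] plus the recognition potential r, since E_{q(θ)}[t_θ(θ)] = ∇ log Z_θ(η_θ) and η⁰_x(θ) consists of the first n coordinates of t_θ(θ)). Let L(η_θ, η_x) be differentiable, suppose η_θ ↦ L(η_θ, η_x) has gradient ∇_{η_θ} L(η_θ, η*_x(η_θ)) = ∇²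 log Z_θ(η_θ) · g(η_θ) for some g(η_θ) ∈ ℝ^{n+1} (the SVI-form partial gradient), and let h(η_θ) = ∇_{η_x} L(η_θ, η*_x(η_θ)) ∈ ℝ^n. Then the gradient of the composite objective G(η_θ) = L(η_θ, η*_x(η_θ)) is ∇G(η_θ) = ∇² log Z_θ(η_θ) · (g(η_θ) + (h(η_θ), 0)); consequently, if ∇² log Z_θ(η_θ) is invertible, the natural gradient (∇² log Z_θ(η_θ))⁻¹ ∇G(η_θ) equals g(η_θ) + (h(η_θ), 0), where (h, 0) ∈ ℝ^{n+1} denotes h padded with a final zero coordinate. -/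
open scoped RealInnerProductSpace

section Aux

variable {n : ℕ}

noncomputable abbrev projCast (n : ℕ) :
    EuclideanSpace ℝ (Fin (n + 1)) →L[ℝ] EuclideanSpace ℝ (Fin n) :=
  LinearMap.toContinuousLinearMap
    { toFun := fun w => (WithLp.toLp 2 (fun i : Fin n => w i.castSucc) : EuclideanSpace ℝ (Fin n)),
      map_add' := fun _ _ => rfl,
      map_smul' := fun _ _ => rfl }

lemma inner_projCast (h : EuclideanSpace ℝ (Fin n)) (w : EuclideanSpace ℝ (Fin (n + 1))) :
    (inner ℝ h (projCast n w) : ℝ)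
      = inner ℝ (show EuclideanSpace ℝ (Fin (n + 1)) from WithLp.toLp 2 (Fin.snoc (WithLp.ofLp h) 0 : Fin (n + 1) → ℝ)) w := by
  simp only [PiLp.inner_apply, RCLike.inner_apply, starRingEnd_apply, star_trivial]
  rw [Fin.sum_univ_castSucc]
  simp [projCast, Fin.snoc_castSucc, Fin.snoc_last]
  rfl

end Aux

/-- **Natural gradient of the composite SVAE objective.**
Let `log Z_θ : ℝ^{n+1} → ℝ` be twice differentiable (gradient `Gz` everywhere,
`∇² log Z_θ(η_θ) = Hess` at `η_θ`), let `Π : ℝ^{n+1} → ℝⁿ` be the projection onto the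
first `n` coordinates, let `r ∈ ℝⁿ`, and define
`η*_x(η) = Π(∇ log Z_θ(η)) + r` (the optimal local variational parameter: the expected
prior natural parameter plus the recognition potential).  Let `L : ℝ^{n+1} × ℝⁿ → ℝ`
be differentiable at `(η_θ, η*_x(η_θ))`, suppose the partial gradient in the first
argument is `∇_{η_θ} L(η_θ, η*_x(η_θ)) = ∇² log Z_θ(η_θ) · g` (the SVI-form partial
gradient), and let `h = ∇_{η_x} L(η_θ, η*_x(η_θ))`.  Then the composite objective
`G(η) = L(η, η*_x(η))` has gradient `∇G(η_θ) = ∇² log Z_θ(η_θ) · (g + (h, 0))` at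
`η_θ`, where `(h, 0)` is `h` padded with a final zero coordinate; consequently, if
`∇² log Z_θ(η_θ)` is invertible (with inverse `Hinv`), the natural gradient
`(∇² log Z_θ(η_θ))⁻¹ ∇G(η_θ)` equals `g + (h, 0)`. -/
theorem stmt18 {n : ℕ}
    (logZθ : EuclideanSpace ℝ (Fin (n + 1)) → ℝ)
    (Gz : EuclideanSpace ℝ (Fin (n + 1)) → EuclideanSpace ℝ (Fin (n + 1)))
    (hGz : ∀ η, HasGradientAt logZθ (Gz η) η)
    (Hess : EuclideanSpace ℝ (Fin (n + 1)) →L[ℝ] EuclideanSpace ℝ (Fin (n + 1)))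
    (ηθ : EuclideanSpace ℝ (Fin (n + 1)))
    (hHess : HasFDerivAt Gz Hess ηθ)
    (r : EuclideanSpace ℝ (Fin n))
    (ηstarx : EuclideanSpace ℝ (Fin (n + 1)) → EuclideanSpace ℝ (Fin n))
    (hηstarx : ∀ η, ηstarx η =
      (show EuclideanSpace ℝ (Fin n) from WithLp.toLp 2 (fun i : Fin n => Gz η i.castSucc)) + r)
    (L : EuclideanSpace ℝ (Fin (n + 1)) × EuclideanSpace ℝ (Fin n) → ℝ)
    (hL : DifferentiableAt ℝ L (ηθ, ηstarx ηθ))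
    (g : EuclideanSpace ℝ (Fin (n + 1)))
    (hg : gradient (fun η => L (η, ηstarx ηθ)) ηθ = Hess g)
    (h : EuclideanSpace ℝ (Fin n))
    (hh : h = gradient (fun ξ => L (ηθ, ξ)) (ηstarx ηθ)) :
    HasGradientAt (fun η => L (η, ηstarx η))
      (Hess (g + (show EuclideanSpace ℝ (Fin (n + 1)) from WithLp.toLp 2 (Fin.snoc (WithLp.ofLp h) 0 : Fin (n + 1) → ℝ)))) ηθ
    ∧ ∀ Hinv : EuclideanSpace ℝ (Fin (n + 1)) →L[ℝ] EuclideanSpace ℝ (Fin (n + 1)),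
        (∀ v, Hinv (Hess v) = v) → (∀ v, Hess (Hinv v) = v) →
        Hinv (gradient (fun η => L (η, ηstarx η)) ηθ)
          = g + (show EuclideanSpace ℝ (Fin (n + 1)) from WithLp.toLp 2 (Fin.snoc (WithLp.ofLp h) 0 : Fin (n + 1) → ℝ)) := by
  classical
  have hstar : HasFDerivAt ηstarx ((projCast n).comp Hess) ηθ := by
    have he : ηstarx = fun η => projCast n (Gz η) + r := by
      funext η; rw [hηstarx η]; rfl
    rw [he]
    exact ((projCast n).hasFDerivAt.comp ηθ hHess).add_const r
  set L' : (EuclideanSpace ℝ (Fin (n + 1)) × EuclideanSpace ℝ (Fin n)) →L[ℝ] ℝ :=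
    fderiv ℝ L (ηθ, ηstarx ηθ) with hL'def
  have hL' : HasFDerivAt L L' (ηθ, ηstarx ηθ) := hL.hasFDerivAt
  have h1 : HasFDerivAt (fun η => L (η, ηstarx ηθ))
      (L'.comp (ContinuousLinearMap.inl ℝ _ _)) ηθ :=
    hL'.comp ηθ (hasFDerivAt_prodMk_left ηθ (ηstarx ηθ))
  have h2 : HasFDerivAt (fun ξ => L (ηθ, ξ))
      (L'.comp (ContinuousLinearMap.inr ℝ _ _)) (ηstarx ηθ) :=
    hL'.comp (ηstarx ηθ) (hasFDerivAt_prodMk_right ηθ (ηstarx ηθ))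
  have h1g : HasGradientAt (fun η => L (η, ηstarx ηθ)) (Hess g) ηθ := by
    rw [← hg]; exact h1.differentiableAt.hasGradientAt
  have h2g : HasGradientAt (fun ξ => L (ηθ, ξ)) h (ηstarx ηθ) := by
    rw [hh]
    exact h2.differentiableAt.hasGradientAt
  have h1e : ∀ v, L' (v, 0) = ⟪Hess g, v⟫ := by
    intro v
    have huniq := h1.unique h1g.hasFDerivAt
    calc L' (v, 0) = (L'.comp (ContinuousLinearMap.inl ℝ _ _)) v := rfl
      _ = (InnerProductSpace.toDual ℝ _ (Hess g)) v := by rw [huniq]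
      _ = ⟪Hess g, v⟫ := InnerProductSpace.toDual_apply_apply
  have h2e : ∀ w, L' (0, w) = ⟪h, w⟫ := by
    intro w
    have huniq := h2.unique h2g.hasFDerivAt
    calc L' (0, w) = (L'.comp (ContinuousLinearMap.inr ℝ _ _)) w := rfl
      _ = (InnerProductSpace.toDual ℝ _ h) w := by rw [huniq]
      _ = ⟪h, w⟫ := InnerProductSpace.toDual_apply_apply
  have hsymm : ∀ v w, ⟪Hess v, w⟫ = ⟪Hess w, v⟫ := by
    set D : EuclideanSpace ℝ (Fin (n + 1)) →L[ℝ]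
        (EuclideanSpace ℝ (Fin (n + 1)) →L[ℝ] ℝ) := LinearMap.toContinuousLinearMap
      { toFun := fun x => InnerProductSpace.toDual ℝ _ x,
        map_add' := fun _ _ => by simp,
        map_smul' := fun _ _ => by simp } with hD
    have hf : ∀ y, HasFDerivAt logZθ (D (Gz y)) y := fun y => (hGz y).hasFDerivAt
    have hx : HasFDerivAt (fun y => D (Gz y)) (D.comp Hess) ηθ :=
      D.hasFDerivAt.comp ηθ hHess
    intro v w
    have hsec := second_derivative_symmetric hf hx v w
    simpa [hD, InnerProductSpace.toDual_apply_apply] using hsec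
  have hpair : HasFDerivAt (fun η : EuclideanSpace ℝ (Fin (n + 1)) => (η, ηstarx η))
      ((ContinuousLinearMap.id ℝ _).prod ((projCast n).comp Hess)) ηθ :=
    HasFDerivAt.prodMk (hasFDerivAt_id ηθ) hstar
  have hF : HasFDerivAt (fun η => L (η, ηstarx η))
      (L'.comp ((ContinuousLinearMap.id ℝ _).prod ((projCast n).comp Hess))) ηθ :=
    hL'.comp ηθ hpair
  have key : HasGradientAt (fun η => L (η, ηstarx η))
      (Hess (g + (show EuclideanSpace ℝ (Fin (n + 1)) from WithLp.toLp 2 (Fin.snoc (WithLp.ofLp h) 0 : Fin (n + 1) → ℝ)))) ηθ := by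
    rw [hasGradientAt_iff_hasFDerivAt]
    have heq : (InnerProductSpace.toDual ℝ _)
          (Hess (g + (show EuclideanSpace ℝ (Fin (n + 1)) from WithLp.toLp 2 (Fin.snoc (WithLp.ofLp h) 0 : Fin (n + 1) → ℝ))))
        = L'.comp ((ContinuousLinearMap.id ℝ _).prod ((projCast n).comp Hess)) := by
      apply ContinuousLinearMap.ext
      intro v
      have hdecomp : ((v, projCast n (Hess v)) :
            EuclideanSpace ℝ (Fin (n + 1)) × EuclideanSpace ℝ (Fin n))
          = (v, 0) + (0, projCast n (Hess v)) := by simp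
      calc (InnerProductSpace.toDual ℝ _)
            (Hess (g + (show EuclideanSpace ℝ (Fin (n + 1)) from WithLp.toLp 2 (Fin.snoc (WithLp.ofLp h) 0 : Fin (n + 1) → ℝ)))) v
          = ⟪Hess (g + (show EuclideanSpace ℝ (Fin (n + 1)) from WithLp.toLp 2 (Fin.snoc (WithLp.ofLp h) 0 : Fin (n + 1) → ℝ))), v⟫ :=
            InnerProductSpace.toDual_apply_apply
        _ = ⟪Hess g, v⟫
            + ⟪Hess (show EuclideanSpace ℝ (Fin (n + 1)) from WithLp.toLp 2 (Fin.snoc (WithLp.ofLp h) 0 : Fin (n + 1) → ℝ)), v⟫ := by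
            rw [map_add, inner_add_left]
        _ = ⟪Hess g, v⟫ + ⟪h, projCast n (Hess v)⟫ := by
            congr 1
            calc ⟪Hess (show EuclideanSpace ℝ (Fin (n + 1)) from WithLp.toLp 2 (Fin.snoc (WithLp.ofLp h) 0 : Fin (n + 1) → ℝ)), v⟫
                = ⟪Hess v, (show EuclideanSpace ℝ (Fin (n + 1)) from WithLp.toLp 2 (Fin.snoc (WithLp.ofLp h) 0 : Fin (n + 1) → ℝ))⟫ :=
                  hsymm _ v
              _ = ⟪(show EuclideanSpace ℝ (Fin (n + 1)) from WithLp.toLp 2 (Fin.snoc (WithLp.ofLp h) 0 : Fin (n + 1) → ℝ)), Hess v⟫ :=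
                  real_inner_comm _ _
              _ = ⟪h, projCast n (Hess v)⟫ := (inner_projCast h (Hess v)).symm
        _ = L' (v, 0) + L' (0, projCast n (Hess v)) := by rw [h1e, h2e]
        _ = L' (v, projCast n (Hess v)) := by rw [← map_add, ← hdecomp]
        _ = (L'.comp ((ContinuousLinearMap.id ℝ _).prod ((projCast n).comp Hess))) v := rfl
    rw [heq]
    exact hF
  refine ⟨key, fun Hinv hinv1 hinv2 => ?_⟩
  rw [key.gradient, hinv1]
end
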